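/- arXiv:1206.4019 — 3 statements merged into one kernel-verified Lean document; each statement's English description precedes it below -/
import Mathlib

section
/- Every element of L_1 is an eigenvector of Δ_h with eigenvalue −1, and for each k ≥ 2 every element of L_k is an eigenvector of Δ_h with eigenvalue −p^{k−1}; moreover each L_k is a nonzero (indeed infinite-dimensional) closed subspace of ℓ²(X). -/
noncomputable section
open scoped ENNReal

def HX (ν : ℕ) : Type := {x : ℕ → Fin ν // ∃ N, ∀ n, N ≤ n → (x n : ℕ) = 0}
instance (ν : ℕ) : DecidableEq (HX ν) := Classical.decEq _
abbrev Hl2 (ν : ℕ) : Type := lp (fun _ : HX ν => ℝ) 2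
def cube (ν : ℕ) (r : ℕ) (x : HX ν) : Set (HX ν) := {y | ∀ n, r ≤ n → y.1 n = x.1 n}
def cubeSum (ν r : ℕ) (x : HX ν) (ψ : Hl2 ν) : ℝ := ∑' y : cube ν r x, ψ y
def IsHierLap (ν : ℕ) (p : ℝ) (Δ : Hl2 ν →L[ℝ] Hl2 ν) : Prop :=
  ∀ ψ x, Δ ψ x = ∑' r : ℕ,
    (1 - p) * p ^ r * (((ν : ℝ) ^ (r + 1))⁻¹ * cubeSum ν (r + 1) x ψ - ψ x)
/-- `Lspace ν k` for `k ≥ 1`: functions constant on every cube of rank `k-1`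
whose sum over every cube of rank `k` vanishes.  (For `k = 1` the first
condition is vacuous since cubes of rank `0` are singletons.) -/
def Lspace (ν k : ℕ) : Set (Hl2 ν) :=
  {ψ | (∀ x y, y ∈ cube ν (k - 1) x → ψ y = ψ x) ∧ ∀ x, cubeSum ν k x ψ = 0}

-- finiteness of cubes
lemma cube_finite (ν r : ℕ) (x : HX ν) : (cube ν r x).Finite := by
  have : Finite ↥(cube ν r x) := by
    refine Finite.of_injective (fun y => (fun i : Fin r => y.1.1 i : Fin r → Fin ν)) ?_
    rintro ⟨y, hy⟩ ⟨z, hz⟩ h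
    apply Subtype.ext; apply Subtype.ext; funext n
    rcases lt_or_ge n r with hn | hn
    · exact congrFun h ⟨n, hn⟩
    · rw [hy n hn, hz n hn]
  exact Set.toFinite _

instance (ν r : ℕ) (x : HX ν) : Fintype ↥(cube ν r x) := (cube_finite ν r x).fintype

lemma cubeSum_eq_sum (ν r : ℕ) (x : HX ν) (ψ : Hl2 ν) :
    cubeSum ν r x ψ = ∑ y : cube ν r x, ψ y := tsum_fintype _

lemma mem_cube_self (ν r : ℕ) (x : HX ν) : x ∈ cube ν r x := fun _ _ => rfl

lemma cube_eq_of_mem {ν r : ℕ} {x y : HX ν} (h : y ∈ cube ν r x) :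
    cube ν r y = cube ν r x := by
  ext z
  constructor <;> intro hz n hn
  · rw [hz n hn, h n hn]
  · rw [hz n hn, ← h n hn]

/-- update coordinate s of x to j -/
def upd (ν : ℕ) (x : HX ν) (s : ℕ) (j : Fin ν) : HX ν :=
  ⟨Function.update x.1 s j, by
    obtain ⟨N, hN⟩ := x.2
    exact ⟨max N (s+1), fun n hn => by
      rw [Function.update_of_ne (by omega)]
      exact hN n (le_trans (le_max_left _ _) hn)⟩⟩

lemma upd_mem_cube (ν s : ℕ) (x : HX ν) (j : Fin ν) :
    upd ν x s j ∈ cube ν (s+1) x := by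
  intro n hn
  exact Function.update_of_ne (by omega) _ _

lemma cube_upd_subset {ν s : ℕ} {x : HX ν} {j : Fin ν} {y : HX ν}
    (h : y ∈ cube ν s (upd ν x s j)) : y ∈ cube ν (s+1) x := by
  intro n hn
  rw [h n (by omega)]
  exact Function.update_of_ne (by omega) _ _

lemma mem_cube_upd {ν s : ℕ} {x y : HX ν} (h : y ∈ cube ν (s+1) x) :
    y ∈ cube ν s (upd ν x s (y.1 s)) := by
  intro n hn
  rcases eq_or_lt_of_le hn with rfl | hlt
  · show _ = Function.update x.1 s (y.1 s) s
    simp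
  · rw [h n hlt]
    show _ = Function.update x.1 s (y.1 s) n
    rw [Function.update_of_ne (by omega)]

lemma cubeSum_succ (ν s : ℕ) (x : HX ν) (ψ : Hl2 ν) :
    cubeSum ν (s+1) x ψ = ∑ j : Fin ν, cubeSum ν s (upd ν x s j) ψ := by
  simp only [cubeSum_eq_sum]
  let e : (Σ j : Fin ν, ↥(cube ν s (upd ν x s j))) ≃ ↥(cube ν (s+1) x) :=
  { toFun := fun q => ⟨q.2.1, cube_upd_subset q.2.2⟩
    invFun := fun y => ⟨y.1.1 s, ⟨y.1, mem_cube_upd y.2⟩⟩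
    left_inv := by
      rintro ⟨j, y, hy⟩
      have hj : y.1 s = j := by
        rw [hy s le_rfl]; exact Function.update_self _ _ _
      subst hj
      rfl
    right_inv := by rintro ⟨y, hy⟩; rfl }
  rw [← e.sum_comp (fun y : ↥(cube ν (s+1) x) => (ψ y : ℝ)), ← Finset.univ_sigma_univ,
    Finset.sum_sigma]
  rfl

lemma cube_zero (ν : ℕ) (x : HX ν) : cube ν 0 x = {x} := by
  ext y
  constructor
  · intro h
    exact Subtype.ext (funext fun n => h n (Nat.zero_le n))
  · rintro rfl _ _; rfl

lemma cubeSum_zero_rank (ν : ℕ) (x : HX ν) (ψ : Hl2 ν) : cubeSum ν 0 x ψ = ψ x := by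
  rw [cubeSum_eq_sum]
  rw [Finset.sum_eq_single_of_mem (⟨x, mem_cube_self ν 0 x⟩ : ↥(cube ν 0 x))
    (Finset.mem_univ _)]
  intro b _ hb
  exfalso
  apply hb
  have hb2 : (b : HX ν) ∈ ({x} : Set (HX ν)) := cube_zero ν x ▸ b.2
  exact Subtype.ext hb2

lemma cubeSum_const {ν : ℕ} (s : ℕ) {x : HX ν} {ψ : Hl2 ν}
    (h : ∀ y ∈ cube ν s x, ψ y = ψ x) :
    cubeSum ν s x ψ = (ν : ℝ) ^ s * ψ x := by
  induction s generalizing x with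
  | zero => simpa using cubeSum_zero_rank ν x ψ
  | succ s ih =>
    rw [cubeSum_succ]
    have key : ∀ j : Fin ν, cubeSum ν s (upd ν x s j) ψ = (ν : ℝ) ^ s * ψ x := by
      intro j
      have hupd : (ψ (upd ν x s j) : ℝ) = ψ x := h _ (upd_mem_cube ν s x j)
      rw [ih (fun y hy => by rw [h y (cube_upd_subset hy), hupd]), hupd]
    simp only [key, Finset.sum_const, Finset.card_univ, Fintype.card_fin, nsmul_eq_mul]
    ring

lemma cubeSum_zero_of_ge {ν k : ℕ} {ψ : Hl2 ν} (h : ∀ x, cubeSum ν k x ψ = 0) :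
    ∀ s, k ≤ s → ∀ x, cubeSum ν s x ψ = 0 := by
  intro s hs
  induction s with
  | zero => have : k = 0 := Nat.le_zero.mp hs; exact this ▸ h
  | succ s ih =>
    rcases Nat.lt_or_ge k (s+1) with hlt | hge
    · intro x
      rw [cubeSum_succ]
      exact Finset.sum_eq_zero fun j _ => ih (by omega) _
    · have : k = s + 1 := by omega
      exact this ▸ h

/-- evaluation at a point as a continuous linear map -/
def evalCLM (ν : ℕ) (x : HX ν) : Hl2 ν →L[ℝ] ℝ :=
  LinearMap.mkContinuous
    { toFun := fun ψ => ψ x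
      map_add' := fun f g => by simp [lp.coeFn_add]
      map_smul' := fun c f => by simp [lp.coeFn_smul] }
    1 (fun ψ => by
      rw [one_mul]; exact lp.norm_apply_le_norm (by norm_num : (2 : ℝ≥0∞) ≠ 0) ψ x)

@[simp] lemma evalCLM_apply (ν : ℕ) (x : HX ν) (ψ : Hl2 ν) : evalCLM ν x ψ = ψ x := rfl

/-- cubeSum as a continuous linear map -/
def cubeSumCLM (ν r : ℕ) (x : HX ν) : Hl2 ν →L[ℝ] ℝ :=
  ∑ y : cube ν r x, evalCLM ν y.1

lemma cubeSumCLM_apply (ν r : ℕ) (x : HX ν) (ψ : Hl2 ν) :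
    cubeSumCLM ν r x ψ = cubeSum ν r x ψ := by
  rw [cubeSum_eq_sum, cubeSumCLM, ContinuousLinearMap.sum_apply]
  rfl

/-- the Lspace as a submodule -/
def LSub (ν k : ℕ) : Submodule ℝ (Hl2 ν) :=
  (⨅ x : HX ν, ⨅ y : HX ν, ⨅ _ : y ∈ cube ν (k - 1) x,
      LinearMap.ker ((evalCLM ν y - evalCLM ν x : Hl2 ν →L[ℝ] ℝ) : Hl2 ν →ₗ[ℝ] ℝ)) ⊓
    ⨅ x : HX ν, LinearMap.ker (cubeSumCLM ν k x : Hl2 ν →ₗ[ℝ] ℝ)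

lemma LSub_coe (ν k : ℕ) : (LSub ν k : Set (Hl2 ν)) = Lspace ν k := by
  ext ψ
  simp only [LSub, Submodule.mem_inf, Submodule.mem_iInf, LinearMap.mem_ker,
    ContinuousLinearMap.coe_sub', Pi.sub_apply, evalCLM_apply, sub_eq_zero,
    ContinuousLinearMap.coe_coe, cubeSumCLM_apply, SetLike.mem_coe]
  constructor
  · rintro ⟨h1, h2⟩
    exact ⟨fun x y hy => h1 x y hy, h2⟩
  · rintro ⟨h1, h2⟩
    exact ⟨fun x y hy => h1 x y hy, h2⟩

lemma LSub_closed (ν k : ℕ) : IsClosed ((LSub ν k : Set (Hl2 ν))) := by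
  rw [LSub_coe]
  have : Lspace ν k =
      (⋂ x : HX ν, ⋂ y : HX ν, ⋂ _ : y ∈ cube ν (k - 1) x,
        {ψ : Hl2 ν | evalCLM ν y ψ = evalCLM ν x ψ}) ∩
      ⋂ x : HX ν, (cubeSumCLM ν k x) ⁻¹' {0} := by
    ext ψ
    simp only [Lspace, Set.mem_inter_iff, Set.mem_iInter, Set.mem_setOf_eq,
      Set.mem_preimage, Set.mem_singleton_iff, evalCLM_apply, cubeSumCLM_apply]
  rw [this]
  refine IsClosed.inter ?_ ?_
  · refine isClosed_iInter fun x => isClosed_iInter fun y => isClosed_iInter fun _ => ?_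
    exact isClosed_eq (evalCLM ν y).continuous (evalCLM ν x).continuous
  · exact isClosed_iInter fun x => isClosed_singleton.preimage (cubeSumCLM ν k x).continuous

lemma cubeSum_set_congr {ν r : ℕ} {x x' : HX ν} (h : cube ν r x = cube ν r x')
    (ψ : Hl2 ν) : cubeSum ν r x ψ = cubeSum ν r x' ψ := by
  unfold cubeSum
  rw [h]

/-- coefficient function -/
def c0 (ν : ℕ) (h1 : 1 < ν) (j : Fin ν) : ℝ :=
  (if j = (⟨0, by omega⟩ : Fin ν) then 1 else 0) - (if j = ⟨1, h1⟩ then 1 else 0)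

lemma c0_sum (ν : ℕ) (h1 : 1 < ν) : ∑ j : Fin ν, c0 ν h1 j = 0 := by
  simp [c0, Finset.sum_sub_distrib]

lemma c0_zero (ν : ℕ) (h1 : 1 < ν) : c0 ν h1 ⟨0, by omega⟩ = 1 := by
  simp [c0, Fin.ext_iff]

/-- base points with pairwise disjoint cubes of rank K+1 -/
def xpt (ν K m : ℕ) (h1 : 1 < ν) : HX ν :=
  ⟨fun n => if n = K + 1 + m then ⟨1, h1⟩ else ⟨0, by omega⟩,
   ⟨K + m + 2, fun n hn => by simp [show n ≠ K + 1 + m by omega]⟩⟩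

open Classical in
/-- the test functions -/
def phi (ν K m : ℕ) (h1 : 1 < ν) : Hl2 ν :=
  ⟨fun z => if z ∈ cube ν (K+1) (xpt ν K m h1) then c0 ν h1 (z.1 K) else 0,
   (memℓp_zero (Set.Finite.subset (cube_finite ν (K+1) (xpt ν K m h1))
     (fun z hz => by by_contra h; exact hz (if_neg h)))).of_exponent_ge
     (by norm_num : (0:ℝ≥0∞) ≤ 2)⟩

open Classical in
lemma phi_apply (ν K m : ℕ) (h1 : 1 < ν) (z : HX ν) :
    phi ν K m h1 z = if z ∈ cube ν (K+1) (xpt ν K m h1) then c0 ν h1 (z.1 K) else 0 :=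
  rfl

lemma phi_mem (ν K m : ℕ) (h1 : 1 < ν) : phi ν K m h1 ∈ Lspace ν (K+1) := by
  constructor
  · intro x y hy
    have hy' : y ∈ cube ν K x := by simpa using hy
    have hK : y.1 K = x.1 K := hy' K le_rfl
    have hmem : y ∈ cube ν (K+1) (xpt ν K m h1) ↔ x ∈ cube ν (K+1) (xpt ν K m h1) := by
      constructor <;> intro h n hn
      · rw [← hy' n (by omega)]; exact h n hn
      · rw [hy' n (by omega)]; exact h n hn
    rw [phi_apply, phi_apply, hK]
    by_cases h : x ∈ cube ν (K+1) (xpt ν K m h1)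
    · rw [if_pos (hmem.mpr h), if_pos h]
    · rw [if_neg (fun hh => h (hmem.mp hh)), if_neg h]
  · intro x
    by_cases hx : x ∈ cube ν (K+1) (xpt ν K m h1)
    · rw [cubeSum_set_congr (cube_eq_of_mem hx), cubeSum_succ]
      have key : ∀ j : Fin ν,
          cubeSum ν K (upd ν (xpt ν K m h1) K j) (phi ν K m h1) = (ν:ℝ)^K * c0 ν h1 j := by
        intro j
        have hval : ∀ y ∈ cube ν K (upd ν (xpt ν K m h1) K j),
            phi ν K m h1 y = c0 ν h1 j := by
          intro y hy
          have h1m : y ∈ cube ν (K+1) (xpt ν K m h1) := cube_upd_subset hy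
          have h2m : y.1 K = j := by
            rw [hy K le_rfl]
            exact Function.update_self _ _ _
          rw [phi_apply, if_pos h1m, h2m]
        have hctr : phi ν K m h1 (upd ν (xpt ν K m h1) K j) = c0 ν h1 j :=
          hval _ (mem_cube_self _ _ _)
        rw [cubeSum_const K (fun y hy => by rw [hval y hy, hctr]), hctr]
      simp only [key, ← Finset.mul_sum, c0_sum, mul_zero]
    · rw [cubeSum_eq_sum]
      refine Finset.sum_eq_zero fun y _ => ?_
      have hy : (y : HX ν) ∉ cube ν (K+1) (xpt ν K m h1) := by
        intro hmem
        apply hx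
        intro n hn
        have h1' : (y : HX ν).1 n = x.1 n := by
          have := y.2
          exact y.2 n hn
        rw [← h1', hmem n hn]
      rw [phi_apply, if_neg hy]

lemma xpt_coord_lt (ν K m : ℕ) (h1 : 1 < ν) :
    (xpt ν K m h1).1 K = ⟨0, by omega⟩ := by
  simp [xpt, show K ≠ K + 1 + m by omega]

lemma phi_self (ν K m : ℕ) (h1 : 1 < ν) : phi ν K m h1 (xpt ν K m h1) = 1 := by
  rw [phi_apply, if_pos (mem_cube_self _ _ _), xpt_coord_lt, c0_zero]

lemma phi_ne_apply (ν K : ℕ) (h1 : 1 < ν) {m m' : ℕ} (h : m ≠ m') :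
    phi ν K m h1 (xpt ν K m' h1) = 0 := by
  rw [phi_apply, if_neg]
  intro hmem
  have := hmem (K + 1 + m') (by omega)
  simp only [xpt] at this
  rw [if_neg (by omega : K + 1 + m' ≠ K + 1 + m)] at this
  simp only [if_true] at this
  exact absurd (congrArg Fin.val this) (by simp)

lemma phi_ne_zero (ν K m : ℕ) (h1 : 1 < ν) : phi ν K m h1 ≠ 0 := by
  intro h
  have := phi_self ν K m h1
  rw [h] at this
  simp only [lp.coeFn_zero, Pi.zero_apply] at this
  exact one_ne_zero this.symm

lemma li_pi_single : LinearIndependent ℝ (fun m : ℕ => (Pi.single m (1:ℝ) : ℕ → ℝ)) := by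
  rw [linearIndependent_iff']
  intro s g h i hi
  have := congrFun h i
  simpa [Finset.sum_apply, Pi.single_apply, Finset.sum_ite_eq' s, hi] using this

/-- evaluation along the xpt family, as a linear map -/
def evalFam (ν K : ℕ) (h1 : 1 < ν) : Hl2 ν →ₗ[ℝ] (ℕ → ℝ) where
  toFun := fun ψ m => ψ (xpt ν K m h1)
  map_add' := fun f g => by funext m; simp [lp.coeFn_add]
  map_smul' := fun c f => by funext m; simp [lp.coeFn_smul]

lemma li_phi (ν K : ℕ) (h1 : 1 < ν) :
    LinearIndependent ℝ (fun m : ℕ => phi ν K m h1) := by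
  have hcomp : (evalFam ν K h1) ∘ (fun m : ℕ => phi ν K m h1) =
      fun m : ℕ => (Pi.single m (1:ℝ) : ℕ → ℝ) := by
    funext m
    funext m'
    simp only [Function.comp, evalFam, LinearMap.coe_mk, AddHom.coe_mk]
    rcases eq_or_ne m m' with rfl | hmm
    · rw [phi_self, Pi.single_eq_same]
    · rw [phi_ne_apply ν K h1 hmm, Pi.single_eq_of_ne (Ne.symm hmm)]
  exact LinearIndependent.of_comp (evalFam ν K h1) (hcomp ▸ li_pi_single)

lemma cube_subset_of_le {ν : ℕ} {a b : ℕ} (h : a ≤ b) (x : HX ν) :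
    cube ν a x ⊆ cube ν b x := fun y hy n hn => hy n (le_trans h hn)

lemma eigen (ν : ℕ) (hν : 2 ≤ ν) (p : ℝ) (hp0 : 0 < p) (hp1 : p < 1)
    (Δ : Hl2 ν →L[ℝ] Hl2 ν) (hΔ : IsHierLap ν p Δ) (K : ℕ)
    (ψ : Hl2 ν) (hψ : ψ ∈ Lspace ν (K+1)) : Δ ψ = (-(p ^ K)) • ψ := by
  obtain ⟨h1, h2⟩ := hψ
  simp only [show K + 1 - 1 = K from rfl] at h1
  apply lp.ext
  funext x
  rw [hΔ ψ x]
  have hterm : ∀ r : ℕ,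
      (1 - p) * p ^ r * (((ν : ℝ) ^ (r + 1))⁻¹ * cubeSum ν (r + 1) x ψ - ψ x) =
      (-((1 - p) * ψ x)) * (if K ≤ r then p ^ r else 0) := by
    intro r
    rcases lt_or_ge r K with hr | hr
    · have hconst : ∀ y ∈ cube ν (r + 1) x, (ψ y : ℝ) = ψ x := fun y hy =>
        h1 x y (cube_subset_of_le (by omega) x hy)
      rw [cubeSum_const (r + 1) hconst, if_neg (by omega)]
      have hν0 : ((ν : ℝ) ^ (r + 1)) ≠ 0 := by positivity
      field_simp
      ring
    · rw [cubeSum_zero_of_ge h2 (r + 1) (by omega) x, if_pos hr]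
      ring
  rw [tsum_congr hterm, tsum_mul_left]
  have hg : Summable (fun r : ℕ => if K ≤ r then p ^ r else 0) := by
    refine Summable.of_nonneg_of_le (fun r => ?_) (fun r => ?_)
      (summable_geometric_of_lt_one hp0.le hp1)
    · split <;> positivity
    · split
      · exact le_rfl
      · positivity
  have hgs : ∑' r : ℕ, (if K ≤ r then p ^ r else 0) = p ^ K * (1 - p)⁻¹ := by
    rw [← Summable.sum_add_tsum_nat_add K hg]
    rw [Finset.sum_eq_zero (fun i hi => if_neg (by simp at hi; omega))]
    have : ∀ i : ℕ, (if K ≤ i + K then p ^ (i + K) else 0) = p ^ K * p ^ i := by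
      intro i
      rw [if_pos (by omega), pow_add]
      ring
    rw [zero_add, tsum_congr this, tsum_mul_left,
      tsum_geometric_of_lt_one hp0.le hp1]
  rw [hgs]
  have hcoe : ((-(p ^ K)) • ψ) x = (-(p ^ K)) * ψ x := by
    rw [lp.coeFn_smul]
    simp
  rw [hcoe]
  have h1p : (1 : ℝ) - p ≠ 0 := by linarith
  field_simp

theorem stmt1 (ν : ℕ) (hν : 2 ≤ ν) (p : ℝ) (hp0 : 0 < p) (hp1 : p < 1)
    (Δ : Hl2 ν →L[ℝ] Hl2 ν) (hΔ : IsHierLap ν p Δ) :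
    ∀ k : ℕ, 1 ≤ k →
      ((∀ ψ : Hl2 ν, ψ ∈ Lspace ν k → Δ ψ = (-(p ^ (k - 1))) • ψ) ∧
        ∃ L : Submodule ℝ (Hl2 ν), (L : Set (Hl2 ν)) = Lspace ν k ∧
          IsClosed (L : Set (Hl2 ν)) ∧ L ≠ ⊥ ∧ ¬ FiniteDimensional ℝ L) := by
  intro k hk
  obtain ⟨K, rfl⟩ : ∃ K, k = K + 1 := ⟨k - 1, by omega⟩
  have h1ν : 1 < ν := by omega
  constructor
  · intro ψ hψ
    exact eigen ν hν p hp0 hp1 Δ hΔ K ψ hψ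
  · refine ⟨LSub ν (K+1), LSub_coe ν (K+1), LSub_closed ν (K+1), ?_, ?_⟩
    · rw [Submodule.ne_bot_iff]
      refine ⟨phi ν K 0 h1ν, ?_, phi_ne_zero ν K 0 h1ν⟩
      rw [← SetLike.mem_coe, LSub_coe]
      exact phi_mem ν K 0 h1ν
    · intro hfd
      haveI := hfd
      have hmem : ∀ m, phi ν K m h1ν ∈ LSub ν (K+1) := fun m => by
        rw [← SetLike.mem_coe, LSub_coe]; exact phi_mem ν K m h1ν
      have hv : LinearIndependent ℝ
          (fun m : ℕ => (⟨phi ν K m h1ν, hmem m⟩ : LSub ν (K+1))) :=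
        LinearIndependent.of_comp (LSub ν (K+1)).subtype (by exact li_phi ν K h1ν)
      exact absurd hv.aleph0_le_rank (not_le.mpr (Module.rank_lt_aleph0 ℝ _))
end
end

section
/- For every y ∈ X the expansion δ_y = Σ_{k=1}^∞ (ν^{−(k−1)} 1_{Q^{(k−1)}(y)} − ν^{−k} 1_{Q^{(k)}(y)}) holds with convergence in ℓ²(X), where the k-th summand belongs to L_k; consequently the subspaces L_1, L_2, L_3, … are mutually orthogonal and their closed linear span is all of ℓ²(X), i.e. ℓ²(X) = ⊕_{k=1}^∞ L_k. -/
noncomputable section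
open scoped ENNReal

def hdelta (ν : ℕ) (x : HX ν) : Hl2 ν := lp.single 2 x 1
namespace Stmt2Aux
variable {ν : ℕ}

theorem hx_ext {x y : HX ν} (h : ∀ n, x.1 n = y.1 n) : x = y := Subtype.ext (funext h)

theorem mem_cube_self (r : ℕ) (x : HX ν) : x ∈ cube ν r x := fun _ _ => rfl

theorem cube_mono {r s : ℕ} (h : r ≤ s) (x : HX ν) : cube ν r x ⊆ cube ν s x :=
  fun _ hz n hn => hz n (h.trans hn)

theorem mem_cube_symm {r : ℕ} {x y : HX ν} (h : y ∈ cube ν r x) : x ∈ cube ν r y :=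
  fun n hn => (h n hn).symm

theorem mem_cube_trans {r : ℕ} {x y z : HX ν} (h1 : y ∈ cube ν r x) (h2 : z ∈ cube ν r y) :
    z ∈ cube ν r x := fun n hn => (h2 n hn).trans (h1 n hn)

theorem cube_eq_of_mem {r : ℕ} {x y : HX ν} (h : y ∈ cube ν r x) : cube ν r y = cube ν r x :=
  Set.ext fun z => ⟨fun hz => mem_cube_trans h hz, fun hz => mem_cube_trans (mem_cube_symm h) hz⟩

theorem cube_zero (x : HX ν) : cube ν 0 x = {x} := by
  ext z
  constructor
  · intro hz; exact hx_ext fun n => hz n (Nat.zero_le n)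
  · rintro rfl; exact mem_cube_self 0 z

/-- Cubes of rank `r` have exactly `ν ^ r` elements. -/
def cubeEquiv (r : ℕ) (x : HX ν) : cube ν r x ≃ (Fin r → Fin ν) where
  toFun z i := z.1.1 i
  invFun a := ⟨⟨fun n => if h : n < r then a ⟨n, h⟩ else x.1 n, by
      obtain ⟨N, hN⟩ := x.2
      refine ⟨max N r, fun n hn => ?_⟩
      simp only [dif_neg (show ¬ n < r by omega)]
      exact hN n (by omega)⟩,
    fun n hn => by simp only [dif_neg (by omega : ¬ n < r)]⟩
  left_inv z := by
    apply Subtype.ext; apply hx_ext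
    intro n
    by_cases h : n < r
    · simp [h]
    · simp only [dif_neg h]
      exact (z.2 n (by omega)).symm
  right_inv a := by funext i; simp [i.2]

instance cubeFintype (r : ℕ) (x : HX ν) : Fintype (cube ν r x) :=
  Fintype.ofEquiv _ (cubeEquiv r x).symm

theorem card_cube (r : ℕ) (x : HX ν) : Fintype.card (cube ν r x) = ν ^ r := by
  rw [Fintype.card_congr (cubeEquiv r x), Fintype.card_fun]
  simp


/-- The indicator of the rank-`r` cube around `y`, as a plain function. -/
def gInd (ν r : ℕ) (y : HX ν) : HX ν → ℝ := (cube ν r y).indicator fun _ => 1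

theorem memℓp_finsupp {f : HX ν → ℝ} (h : (Function.support f).Finite) :
    Memℓp f 2 :=
  (memℓp_zero h).of_exponent_ge zero_le

theorem support_gInd (r : ℕ) (y : HX ν) : Function.support (gInd ν r y) ⊆ cube ν r y :=
  fun z hz => by
    by_contra h
    exact hz (Set.indicator_of_notMem h _)

/-- The indicator of a cube as an element of `ℓ²`. -/
def indLp (ν r : ℕ) (y : HX ν) : Hl2 ν :=
  ⟨gInd ν r y, memℓp_finsupp ((Set.toFinite (cube ν r y)).subset (support_gInd r y))⟩

@[simp] theorem indLp_apply (r : ℕ) (y x : HX ν) : (indLp ν r y) x = gInd ν r y x := rfl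

theorem tsum_gInd {r k : ℕ} {y x : HX ν} (h : cube ν r y ⊆ cube ν k x) :
    ∑' z : cube ν k x, gInd ν r y z = (ν : ℝ) ^ r := by
  rw [tsum_subtype, Set.indicator_eq_self.2 ((support_gInd r y).trans h)]
  rw [show gInd ν r y = (cube ν r y).indicator (fun _ => (1:ℝ)) from rfl, ← tsum_subtype]
  rw [tsum_fintype]
  simp only [Finset.sum_const, Finset.card_univ, card_cube]
  simp

theorem tsum_gInd_total (r : ℕ) (y : HX ν) : ∑' z : HX ν, gInd ν r y z = (ν : ℝ) ^ r := by
  rw [show gInd ν r y = (cube ν r y).indicator (fun _ => (1:ℝ)) from rfl, ← tsum_subtype]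
  rw [tsum_fintype]
  simp only [Finset.sum_const, Finset.card_univ, card_cube]
  simp

theorem norm_indLp (hν : 1 ≤ ν) (r : ℕ) (y : HX ν) :
    ‖indLp ν r y‖ = Real.sqrt ν ^ r := by
  rw [lp.norm_eq_tsum_rpow (by norm_num) (indLp ν r y)]
  have h1 : ∀ z : HX ν, ‖(indLp ν r y) z‖ ^ (2 : ℝ≥0∞).toReal = gInd ν r y z := by
    intro z
    by_cases hz : z ∈ cube ν r y <;>
      simp [gInd, Set.indicator_of_mem, Set.indicator_of_notMem, hz,
        Real.rpow_natCast]
  rw [tsum_congr h1, tsum_gInd_total]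
  rw [show ((ν:ℝ))^r = (Real.sqrt ν ^ r) ^ (2:ℕ) by
    rw [← pow_mul, mul_comm, pow_mul, Real.sq_sqrt (by positivity)]]
  rw [← Real.rpow_natCast (Real.sqrt ν ^ r) 2, ← Real.rpow_mul (by positivity)]
  norm_num


/-- The `k`-th term of the expansion of `hdelta ν y`. -/
def Ff (ν : ℕ) (y : HX ν) (k : ℕ) : Hl2 ν :=
  ⟨fun x => ((ν : ℝ) ^ (k - 1))⁻¹ * gInd ν (k - 1) y x - ((ν : ℝ) ^ k)⁻¹ * gInd ν k y x, by
    refine memℓp_finsupp (Set.Finite.subset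
      ((Set.toFinite (cube ν (k-1) y)).union (Set.toFinite (cube ν k y))) ?_)
    intro x hx
    by_contra hmem
    rw [Set.mem_union, not_or] at hmem
    exact hx (by simp [gInd, Set.indicator_of_notMem hmem.1,
      Set.indicator_of_notMem hmem.2])⟩

@[simp] theorem Ff_apply (y : HX ν) (k : ℕ) (x : HX ν) :
    (Ff ν y k) x = ((ν : ℝ) ^ (k - 1))⁻¹ * gInd ν (k - 1) y x
      - ((ν : ℝ) ^ k)⁻¹ * gInd ν k y x := rfl

theorem gInd_const {r : ℕ} {x z : HX ν} (y : HX ν) (hz : z ∈ cube ν r x) :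
    gInd ν r y z = gInd ν r y x := by
  unfold gInd
  by_cases hx : x ∈ cube ν r y
  · rw [Set.indicator_of_mem hx, Set.indicator_of_mem (mem_cube_trans hx hz)]
  · rw [Set.indicator_of_notMem hx, Set.indicator_of_notMem
      (fun hzy => hx (mem_cube_trans hzy (mem_cube_symm hz)))]

theorem Ff_mem (hν : 1 ≤ ν) (y : HX ν) (k : ℕ) : Ff ν y k ∈ Lspace ν k := by
  have hνR : ((ν : ℝ)) ≠ 0 := by positivity
  constructor
  · intro x z hz
    rw [Ff_apply, Ff_apply, gInd_const y hz, gInd_const y (cube_mono (Nat.sub_le k 1) x hz)]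
  · intro x
    unfold cubeSum
    by_cases hx : x ∈ cube ν k y
    · have he : cube ν k x = cube ν k y := cube_eq_of_mem hx
      have h1 : cube ν (k-1) y ⊆ cube ν k x := by
        rw [he]; exact cube_mono (Nat.sub_le k 1) y
      have h2 : cube ν k y ⊆ cube ν k x := by rw [he]
      have hs1 : Summable fun z : cube ν k x =>
          ((ν : ℝ) ^ (k - 1))⁻¹ * gInd ν (k-1) y z := .of_finite
      have hs2 : Summable fun z : cube ν k x =>
          ((ν : ℝ) ^ k)⁻¹ * gInd ν k y z := .of_finite
      calc (∑' z : cube ν k x, (Ff ν y k) z)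
          = (∑' z : cube ν k x, ((ν : ℝ) ^ (k - 1))⁻¹ * gInd ν (k-1) y z)
            - ∑' z : cube ν k x, ((ν : ℝ) ^ k)⁻¹ * gInd ν k y z := Summable.tsum_sub hs1 hs2
        _ = ((ν : ℝ) ^ (k - 1))⁻¹ * (ν : ℝ) ^ (k-1)
            - ((ν : ℝ) ^ k)⁻¹ * (ν : ℝ) ^ k := by
            rw [tsum_mul_left, tsum_mul_left, tsum_gInd h1, tsum_gInd h2]
        _ = 0 := by
            rw [inv_mul_cancel₀ (pow_ne_zero _ hνR), inv_mul_cancel₀ (pow_ne_zero _ hνR),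
              sub_self]
    · have hzero : ∀ z : cube ν k x, (Ff ν y k) z = 0 := by
        intro z
        have hz1 : z.1 ∉ cube ν k y := fun hzy => hx (mem_cube_trans hzy (mem_cube_symm z.2))
        have hz2 : z.1 ∉ cube ν (k-1) y := fun hzy => hz1 (cube_mono (Nat.sub_le k 1) y hzy)
        simp [gInd, Set.indicator_of_notMem hz1, Set.indicator_of_notMem hz2]
      rw [tsum_congr hzero, tsum_zero]

/-- The partial objects `uu n = ν⁻ⁿ • 1_{Q^n(y)}`. -/
def uu (ν : ℕ) (y : HX ν) (n : ℕ) : Hl2 ν := ((ν : ℝ) ^ n)⁻¹ • indLp ν n y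

theorem Ff_succ (y : HX ν) (k : ℕ) : Ff ν y (k + 1) = uu ν y k - uu ν y (k + 1) := by
  apply lp.ext
  funext x
  simp only [Ff_apply, Nat.add_sub_cancel, uu, lp.coeFn_sub, Pi.sub_apply, lp.coeFn_smul,
    Pi.smul_apply, indLp_apply, smul_eq_mul]

theorem norm_uu (hν : 1 ≤ ν) (y : HX ν) (n : ℕ) :
    ‖uu ν y n‖ = (Real.sqrt ν)⁻¹ ^ n := by
  have hs : (0 : ℝ) < Real.sqrt ν := Real.sqrt_pos.2 (by exact_mod_cast hν)
  rw [uu, norm_smul, norm_indLp hν, norm_inv, Real.norm_eq_abs, abs_of_nonneg (by positivity),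
    inv_pow]
  have hν2 : ((ν : ℝ)) ^ n = Real.sqrt ν ^ n * Real.sqrt ν ^ n := by
    rw [← mul_pow, Real.mul_self_sqrt (by positivity)]
  rw [hν2, mul_inv, mul_assoc, inv_mul_cancel₀ (by positivity), mul_one]

theorem uu_zero (hν : 1 ≤ ν) (y : HX ν) : uu ν y 0 = hdelta ν y := by
  apply lp.ext
  funext x
  simp only [uu, pow_zero, inv_one, one_smul, indLp_apply, gInd, cube_zero, hdelta]
  by_cases hxy : x = y
  · subst hxy
    simp [lp.single_apply_self]
  · rw [Set.indicator_of_notMem (by simpa using hxy), lp.single_apply_ne _ _ _ hxy]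

theorem hasSum_Ff (hν : 2 ≤ ν) (y : HX ν) :
    HasSum (fun k : ℕ => Ff ν y (k + 1)) (hdelta ν y) := by
  have hν1 : 1 ≤ ν := by omega
  have hs1 : (1 : ℝ) < Real.sqrt ν := by
    rw [show (1:ℝ) = Real.sqrt 1 by simp]
    exact Real.sqrt_lt_sqrt (by norm_num) (by exact_mod_cast (by omega : 1 < ν))
  set r : ℝ := (Real.sqrt ν)⁻¹ with hr
  have hr0 : 0 ≤ r := by positivity
  have hr1 : r < 1 := inv_lt_one_of_one_lt₀ hs1
  have hgeo : Summable fun k : ℕ => r ^ k + r ^ (k + 1) := by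
    apply (summable_geometric_of_lt_one hr0 hr1).add
    have : (fun k : ℕ => r ^ (k+1)) = fun k : ℕ => r * r ^ k := by
      funext k; rw [pow_succ, mul_comm]
    rw [this]
    exact (summable_geometric_of_lt_one hr0 hr1).mul_left r
  have hbound : ∀ k : ℕ, ‖Ff ν y (k + 1)‖ ≤ r ^ k + r ^ (k + 1) := by
    intro k
    rw [Ff_succ]
    refine (norm_sub_le _ _).trans ?_
    rw [norm_uu hν1, norm_uu hν1]
  have hsum : Summable fun k : ℕ => Ff ν y (k + 1) :=
    Summable.of_norm_bounded hgeo hbound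
  have key : ∀ n : ℕ, ∑ k ∈ Finset.range n, Ff ν y (k + 1) = hdelta ν y - uu ν y n := by
    intro n
    calc ∑ k ∈ Finset.range n, Ff ν y (k + 1)
        = ∑ k ∈ Finset.range n, (uu ν y k - uu ν y (k + 1)) := by
          exact Finset.sum_congr rfl fun k _ => Ff_succ y k
      _ = uu ν y 0 - uu ν y n := Finset.sum_range_sub' (uu ν y) n
      _ = hdelta ν y - uu ν y n := by rw [uu_zero hν1]
  have htend0 : Filter.Tendsto (uu ν y) Filter.atTop (nhds 0) := by
    rw [tendsto_zero_iff_norm_tendsto_zero]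
    have : (fun n => ‖uu ν y n‖) = fun n => r ^ n := by
      funext n; rw [norm_uu hν1]
    rw [this]
    exact tendsto_pow_atTop_nhds_zero_of_lt_one hr0 hr1
  have htends : Filter.Tendsto (fun n => ∑ k ∈ Finset.range n, Ff ν y (k + 1))
      Filter.atTop (nhds (hdelta ν y)) := by
    simp only [key]
    have h' := Filter.Tendsto.const_sub (hdelta ν y) htend0
    rw [sub_zero] at h'
    exact h'
  have := tendsto_nhds_unique hsum.hasSum.tendsto_sum_nat htends
  rw [← this]
  exact hsum.hasSum


section Ortho

variable [NeZero ν]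

/-- Truncation below `k` to zero. -/
def trunc (ν k : ℕ) [NeZero ν] (x : HX ν) : HX ν :=
  ⟨fun n => if n < k then 0 else x.1 n, by
    obtain ⟨N, hN⟩ := x.2
    refine ⟨max N k, fun n hn => ?_⟩
    simp only [if_neg (show ¬ n < k by omega)]
    exact hN n (by omega)⟩

theorem trunc_idem (k : ℕ) (x : HX ν) : trunc ν k (trunc ν k x) = trunc ν k x := by
  apply hx_ext
  intro n
  by_cases h : n < k <;> simp [trunc, h]

theorem mem_cube_trunc (k : ℕ) (x : HX ν) : x ∈ cube ν k (trunc ν k x) :=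
  fun n hn => by simp [trunc, Nat.not_lt.2 hn]

/-- Decomposition of `X` according to cubes of rank `k`. -/
def cubeSigma (ν k : ℕ) [NeZero ν] :
    (Σ z : {z : HX ν // trunc ν k z = z}, cube ν k z.1) ≃ HX ν :=
  Equiv.ofBijective (fun σ => σ.2.1) (by
    constructor
    · rintro ⟨⟨z, hz⟩, x, hxm⟩ ⟨⟨z', hz'⟩, x', hxm'⟩ (h : x = x')
      subst h
      have hzz : z = z' := by
        apply hx_ext
        intro n
        by_cases hn : n < k
        · have e1 : z.1 n = 0 := by
            conv_lhs => rw [← hz]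
            simp [trunc, hn]
          have e2 : z'.1 n = 0 := by
            conv_lhs => rw [← hz']
            simp [trunc, hn]
          rw [e1, e2]
        · rw [← hxm n (by omega), ← hxm' n (by omega)]
      subst hzz
      rfl
    · intro x
      exact ⟨⟨⟨trunc ν k x, trunc_idem k x⟩, ⟨x, mem_cube_trunc k x⟩⟩, rfl⟩)

end Ortho

theorem ortho (hν : 2 ≤ ν) {k l : ℕ} (hkl : k < l) {φ χ : Hl2 ν}
    (hφ : φ ∈ Lspace ν k) (hχ : χ ∈ Lspace ν l) : @inner ℝ _ _ φ χ = 0 := by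
  haveI : NeZero ν := ⟨by omega⟩
  have hinner : @inner ℝ _ _ φ χ = ∑' x : HX ν, φ x * χ x := by
    rw [lp.inner_eq_tsum]
    exact tsum_congr fun x => by simp [RCLike.inner_apply, mul_comm]
  have hsumm : Summable fun x : HX ν => φ x * χ x := by
    have := lp.summable_inner (𝕜 := ℝ) φ χ
    simpa [RCLike.inner_apply, mul_comm] using this
  set e := cubeSigma ν k with he
  have h1 : ∑' x : HX ν, φ x * χ x = ∑' σ, φ (e σ) * χ (e σ) := (e.tsum_eq _).symm
  have h2 : ∑' σ, φ (e σ) * χ (e σ)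
      = ∑' z : {z : HX ν // trunc ν k z = z}, ∑' c : cube ν k z.1,
          φ (e ⟨z, c⟩) * χ (e ⟨z, c⟩) :=
    Summable.tsum_sigma' (fun _ => .of_finite) (e.summable_iff.2 hsumm)
  have h3 : ∀ z : {z : HX ν // trunc ν k z = z},
      (∑' c : cube ν k z.1, φ (e ⟨z, c⟩) * χ (e ⟨z, c⟩)) = 0 := by
    intro z
    have hconst : ∀ c : cube ν k z.1, χ (e ⟨z, c⟩) = χ z.1 := by
      intro c
      have : (c : HX ν) ∈ cube ν (l - 1) z.1 := cube_mono (by omega) z.1 c.2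
      exact hχ.1 z.1 c (by simpa [he, cubeSigma] using this)
    calc (∑' c : cube ν k z.1, φ (e ⟨z, c⟩) * χ (e ⟨z, c⟩))
        = ∑' c : cube ν k z.1, φ c * χ z.1 := by
          refine tsum_congr fun c => ?_
          rw [hconst c]
          rfl
      _ = (∑' c : cube ν k z.1, φ c) * χ z.1 := tsum_mul_right
      _ = 0 := by rw [show (∑' c : cube ν k z.1, φ c) = cubeSum ν k z.1 φ from rfl,
          hφ.2 z.1, zero_mul]
  rw [hinner, h1, h2, tsum_congr h3, tsum_zero]

end Stmt2Aux

open Stmt2Aux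

theorem stmt2 (ν : ℕ) (hν : 2 ≤ ν) :
    (∀ y : HX ν, ∃ f : ℕ → Hl2 ν,
      (∀ k : ℕ, 1 ≤ k → ∀ x : HX ν,
        f k x = ((ν : ℝ) ^ (k - 1))⁻¹ * (cube ν (k - 1) y).indicator (fun _ => (1 : ℝ)) x
              - ((ν : ℝ) ^ k)⁻¹ * (cube ν k y).indicator (fun _ => (1 : ℝ)) x) ∧
      (∀ k : ℕ, 1 ≤ k → f k ∈ Lspace ν k) ∧
      HasSum (fun k : ℕ => f (k + 1)) (hdelta ν y)) ∧
    (∀ k l : ℕ, 1 ≤ k → 1 ≤ l → k ≠ l →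
      ∀ φ ∈ Lspace ν k, ∀ χ ∈ Lspace ν l, @inner ℝ _ _ φ χ = (0 : ℝ)) ∧
    Dense (Submodule.span ℝ (⋃ k ∈ Set.Ici 1, Lspace ν k) : Set (Hl2 ν)) := by
  have hν1 : 1 ≤ ν := by omega
  refine ⟨fun y => ⟨Ff ν y, fun k _ x => rfl, fun k _ => Ff_mem hν1 y k, hasSum_Ff hν y⟩,
    fun k l _ _ hne φ hφ χ hχ => ?_, ?_⟩
  · rcases Nat.lt_or_ge k l with h | h
    · exact ortho hν h hφ hχ
    · have h' : l < k := by omega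
      rw [← real_inner_comm]
      exact ortho hν h' hχ hφ
  · rw [Submodule.dense_iff_topologicalClosure_eq_top, Submodule.topologicalClosure_eq_top_iff,
      Submodule.eq_bot_iff]
    intro χ hχ
    apply lp.ext
    funext y
    have hK : ∀ k : ℕ, Ff ν y (k + 1) ∈ Submodule.span ℝ (⋃ k ∈ Set.Ici 1, Lspace ν k) :=
      fun k => Submodule.subset_span
        (Set.mem_biUnion (Set.mem_Ici.2 (by omega)) (Ff_mem hν1 y (k + 1)))
    have h1 : ∀ k : ℕ, @inner ℝ _ _ χ (Ff ν y (k + 1)) = 0 := fun k => by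
      rw [real_inner_comm]
      exact (Submodule.mem_orthogonal _ χ).1 hχ _ (hK k)
    have h2 : HasSum (fun k : ℕ => @inner ℝ _ _ χ (Ff ν y (k + 1)))
        (@inner ℝ _ _ χ (hdelta ν y)) := by
      simpa using (hasSum_Ff hν y).mapL (innerSL ℝ χ)
    have h3 : @inner ℝ _ _ χ (hdelta ν y) = 0 := by
      rw [funext h1] at h2
      exact h2.unique hasSum_zero
    rw [hdelta, lp.inner_single_right] at h3
    have : χ y = 0 := by simpa [RCLike.inner_apply] using h3
    simp [this]
end
end

section
/- For each k with 0 ≤ k ≤ N−1, the number p^k is an eigenvalue of A_N of multiplicity at least ν^{N−1−k}(ν−1). Consequently, if N_N(λ) = ν^{−N} · (the number of eigenvalues of A_N, counted with multiplicity, that are < λ), then for every λ ∈ (0,1] which is not of the form p^k, N_N(λ) → ν^{−k₀(λ)} as N → ∞, where k₀(λ) = min{k ≥ 0 : p^k < λ}. -/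
noncomputable section
open scoped ENNReal

/-- `k₀(λ) = min {k ≥ 0 : p^k < λ}`. -/
def k0 (p lam : ℝ) : ℕ := sInf {k : ℕ | p ^ k < lam}

/-- The multiplicity of `μ` as an eigenvalue of the compression `A_N = P_N (−Δ_h) P_N`
restricted to the range of `P_N` (functions supported in the cube of rank `N`). -/
def multAN (ν : ℕ) (Δ : Hl2 ν →L[ℝ] Hl2 ν) (P : Hl2 ν →L[ℝ] Hl2 ν) (μ : ℝ) : ℕ :=
  Module.finrank ℝ
    ↥(Module.End.eigenspace ((P.comp ((-Δ).comp P) : Hl2 ν →L[ℝ] Hl2 ν) :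
        Hl2 ν →ₗ[ℝ] Hl2 ν) μ ⊓ LinearMap.range (P : Hl2 ν →ₗ[ℝ] Hl2 ν))

namespace HL
variable {ν : ℕ}

lemma mem_cube_self (r : ℕ) (x : HX ν) : x ∈ cube ν r x := fun _ _ => rfl

lemma cube_eq_of_mem {r : ℕ} {x y : HX ν} (h : y ∈ cube ν r x) : cube ν r y = cube ν r x := by
  ext z
  constructor <;> intro hz n hn
  · rw [hz n hn, h n hn]
  · rw [hz n hn, ← h n hn]

lemma cube_mono {r s : ℕ} (hrs : r ≤ s) (x : HX ν) : cube ν r x ⊆ cube ν s x :=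
  fun _ hy n hn => hy n (le_trans hrs hn)

/-- replace the first `r` coordinates of `x` by `h`. -/
def patch (r : ℕ) (h : Fin r → Fin ν) (x : HX ν) : HX ν :=
  ⟨fun n => if hn : n < r then h ⟨n, hn⟩ else x.1 n, by
    obtain ⟨M, hM⟩ := x.2
    exact ⟨max r M, fun n hn => by
      show ((if hn : n < r then h ⟨n, hn⟩ else x.1 n : Fin ν) : ℕ) = 0
      rw [dif_neg (by omega : ¬ n < r)]
      exact hM n (le_trans (le_max_right _ _) hn)⟩⟩

lemma patch_mem (r : ℕ) (h : Fin r → Fin ν) (x : HX ν) : patch r h x ∈ cube ν r x :=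
  fun n hn => dif_neg (by omega)

lemma patch_coord_lt (r : ℕ) (h : Fin r → Fin ν) (x : HX ν) {n : ℕ} (hn : n < r) :
    (patch r h x).1 n = h ⟨n, hn⟩ := dif_pos hn

def cubeEquiv (r : ℕ) (x : HX ν) : (Fin r → Fin ν) ≃ cube ν r x where
  toFun h := ⟨patch r h x, patch_mem r h x⟩
  invFun y i := y.1.1 i
  left_inv h := by
    funext i
    simp only [patch]
    rw [dif_pos i.isLt]
  right_inv y := by
    apply Subtype.ext; apply Subtype.ext
    funext n
    show (patch r (fun i => y.1.1 i) x).1 n = y.1.1 n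
    by_cases hn : n < r
    · exact patch_coord_lt r _ x hn
    · rw [show (patch r (fun i => y.1.1 i) x).1 n = x.1 n from dif_neg hn]
      exact (y.2 n (by omega)).symm

lemma sum_cube (r : ℕ) (x : HX ν) (F : HX ν → ℝ) :
    ∑' y : cube ν r x, F y = ∑ h : Fin r → Fin ν, F (patch r h x) := by
  rw [← Equiv.tsum_eq (cubeEquiv r x) (fun y => F y.1)]
  exact tsum_fintype _

lemma tsum_cube_mono {N r : ℕ} (hNr : N ≤ r) (x : HX ν) (F : HX ν → ℝ)
    (hF : ∀ y, y ∉ cube ν N x → F y = 0) :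
    ∑' y : cube ν r x, F y = ∑' y : cube ν N x, F y := by
  rw [tsum_subtype, tsum_subtype]
  congr 1
  funext y
  by_cases hy : y ∈ cube ν N x
  · rw [Set.indicator_of_mem hy, Set.indicator_of_mem (cube_mono hNr x hy)]
  · rw [Set.indicator_of_notMem hy]
    by_cases hy' : y ∈ cube ν r x
    · rw [Set.indicator_of_mem hy', hF y hy]
    · rw [Set.indicator_of_notMem hy']

end HL

namespace HL
section LA
variable {ν : ℕ} [NeZero ν]

/-- rows of an invertible `ν × ν` matrix: row 0 = all ones, row j = δ_j − δ_0. -/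
def ee (ν : ℕ) [NeZero ν] (j i : Fin ν) : ℝ :=
  if j = 0 then 1 else (if i = j then 1 else 0) - (if i = 0 then 1 else 0)

/-- the inverse matrix of `ee`. -/
def FF (ν : ℕ) [NeZero ν] (k j : Fin ν) : ℝ :=
  if j = 0 then (ν : ℝ)⁻¹ else (if k = j then 1 else 0) - (ν : ℝ)⁻¹

lemma sum_ee (j : Fin ν) : ∑ i, ee ν j i = if j = 0 then (ν : ℝ) else 0 := by
  by_cases hj : j = 0
  · simp [ee, hj]
  · simp only [ee, hj, if_neg hj, if_false]
    rw [Finset.sum_sub_distrib]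
    simp [Finset.sum_ite_eq' Finset.univ j, Finset.sum_ite_eq' Finset.univ (0 : Fin ν)]

lemma ee_zero_left (i : Fin ν) : ee ν 0 i = 1 := if_pos rfl

lemma card_erase_cast : ((Finset.univ.erase (0 : Fin ν)).card : ℝ) = (ν : ℝ) - 1 := by
  rw [Finset.card_erase_of_mem (Finset.mem_univ _)]
  simp only [Finset.card_univ, Fintype.card_fin]
  have := Nat.pos_of_ne_zero (NeZero.ne ν)
  rw [Nat.cast_sub (by omega)]
  norm_num

lemma FF_mul_ee (k i : Fin ν) : ∑ j, FF ν k j * ee ν j i = if k = i then 1 else 0 := by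
  have hν : (ν : ℝ) ≠ 0 := Nat.cast_ne_zero.2 (NeZero.ne ν)
  rw [← Finset.sum_erase_add _ _ (Finset.mem_univ (0 : Fin ν))]
  have h1 : ∀ j ∈ Finset.univ.erase (0 : Fin ν),
      FF ν k j * ee ν j i =
        ((if k = j then (if i = j then (1:ℝ) else 0) else 0)
          - (if k = j then (1:ℝ) else 0) * (if i = 0 then 1 else 0)
          - (ν : ℝ)⁻¹ * (if i = j then 1 else 0)
          + (ν : ℝ)⁻¹ * (if i = 0 then 1 else 0)) := by
    intro j hj
    have hj0 : j ≠ 0 := (Finset.mem_erase.1 hj).1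
    simp only [FF, ee, if_neg hj0]
    split_ifs <;> ring
  rw [Finset.sum_congr rfl h1]
  rw [Finset.sum_add_distrib, Finset.sum_sub_distrib, Finset.sum_sub_distrib,
    ← Finset.sum_mul, ← Finset.mul_sum]
  rw [Finset.sum_ite_eq (Finset.univ.erase (0 : Fin ν)) k
      (fun j => if i = j then (1:ℝ) else 0)]
  rw [Finset.sum_ite_eq (Finset.univ.erase (0 : Fin ν)) k (fun _ => (1:ℝ))]
  rw [Finset.sum_ite_eq (Finset.univ.erase (0 : Fin ν)) i (fun _ => (1:ℝ))]
  rw [Finset.sum_const, nsmul_eq_mul, card_erase_cast]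
  have hFF0 : FF ν k 0 = (ν : ℝ)⁻¹ := if_pos rfl
  rw [hFF0, ee_zero_left]
  simp only [Finset.mem_erase, Finset.mem_univ, and_true]
  clear h1 hFF0
  by_cases hi0 : i = 0 <;> by_cases hk0 : k = 0 <;> by_cases hki : k = i <;>
    simp only [hi0, hk0, hki, if_true, if_false] <;>
    simp [eq_comm, hi0, hk0, hki] <;> field_simp <;> ring
end LA
end HL

namespace HL
section LA2
variable {ν : ℕ} [NeZero ν]

lemma ee_mul_FF (k i : Fin ν) : ∑ j, ee ν k j * FF ν j i = if k = i then 1 else 0 := by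
  have h : (Matrix.of (FF ν) * Matrix.of (ee ν) : Matrix (Fin ν) (Fin ν) ℝ) = 1 := by
    ext k i
    rw [Matrix.mul_apply]
    simp only [Matrix.of_apply, Matrix.one_apply]
    exact FF_mul_ee k i
  have h2 := mul_eq_one_comm.mp h
  have := congrFun (congrFun h2 k) i
  rw [Matrix.mul_apply] at this
  simpa only [Matrix.of_apply, Matrix.one_apply] using this

variable {N : ℕ}

/-- tensor-product basis vectors for functions on `(Fin N → Fin ν)`. -/
def BB (ν N : ℕ) [NeZero ν] (g : Fin N → Fin ν) : (Fin N → Fin ν) → ℝ :=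
  fun x => ∏ n, ee ν (g n) (x n)

/-- dual coefficients. -/
def cf (ν N : ℕ) [NeZero ν] (v : (Fin N → Fin ν) → ℝ) (g : Fin N → Fin ν) : ℝ :=
  ∑ x : Fin N → Fin ν, v x * ∏ n, FF ν (x n) (g n)

lemma prod_ite_eq_ite (g k : Fin N → Fin ν) :
    (∏ n, if g n = k n then (1:ℝ) else 0) = if g = k then 1 else 0 := by
  by_cases h : g = k
  · subst h; simp
  · rw [if_neg h]
    obtain ⟨n, hn⟩ := Function.ne_iff.1 h
    exact Finset.prod_eq_zero (Finset.mem_univ n) (if_neg hn)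

lemma pair_BB_FF (g k : Fin N → Fin ν) :
    ∑ x : Fin N → Fin ν, BB ν N g x * ∏ n, FF ν (x n) (k n) = if g = k then 1 else 0 := by
  have : ∀ x : Fin N → Fin ν, BB ν N g x * (∏ n, FF ν (x n) (k n))
      = ∏ n, (ee ν (g n) (x n) * FF ν (x n) (k n)) := by
    intro x; rw [BB, ← Finset.prod_mul_distrib]
  rw [Finset.sum_congr rfl (fun x _ => this x), ← Fintype.prod_sum
    (fun n j => ee ν (g n) j * FF ν j (k n))]
  rw [Finset.prod_congr rfl (fun n _ => ee_mul_FF (g n) (k n))]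
  exact prod_ite_eq_ite g k

lemma cf_sum (c : (Fin N → Fin ν) → ℝ) (k : Fin N → Fin ν) :
    cf ν N (∑ g, c g • BB ν N g) k = c k := by
  rw [cf]
  have : ∀ x, (∑ g, c g • BB ν N g) x * ∏ n, FF ν (x n) (k n)
      = ∑ g, c g * (BB ν N g x * ∏ n, FF ν (x n) (k n)) := by
    intro x
    rw [Finset.sum_apply, Finset.sum_mul]
    exact Finset.sum_congr rfl fun g _ => by simp [mul_assoc]
  rw [Finset.sum_congr rfl (fun x _ => this x), Finset.sum_comm]
  rw [Finset.sum_congr rfl (fun g _ => by rw [← Finset.mul_sum, pair_BB_FF g k])]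
  simp [Finset.sum_ite_eq' Finset.univ k]

lemma BB_li : LinearIndependent ℝ (BB ν N) := by
  rw [Fintype.linearIndependent_iff]
  intro c hc k
  have := cf_sum c k
  rw [show (∑ g, c g • BB ν N g) = 0 from hc] at this
  rw [← this, cf]
  simp

lemma expand_BB (v : (Fin N → Fin ν) → ℝ) : v = ∑ g, cf ν N v g • BB ν N g := by
  funext x
  rw [Finset.sum_apply]
  have : ∀ g, (cf ν N v g • BB ν N g) x
      = ∑ y, v y * ∏ n, (FF ν (y n) (g n) * ee ν (g n) (x n)) := by
    intro g
    rw [Pi.smul_apply, smul_eq_mul, cf, Finset.sum_mul]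
    refine Finset.sum_congr rfl fun y _ => ?_
    rw [mul_assoc, BB, ← Finset.prod_mul_distrib]
  rw [Finset.sum_congr rfl (fun g _ => this g), Finset.sum_comm]
  have : ∀ y : Fin N → Fin ν, ∑ g : Fin N → Fin ν, v y * ∏ n, (FF ν (y n) (g n) * ee ν (g n) (x n))
      = v y * (if y = x then 1 else 0) := by
    intro y
    rw [← Finset.mul_sum, ← Fintype.prod_sum (fun n j => FF ν (y n) j * ee ν j (x n))]
    rw [Finset.prod_congr rfl (fun n _ => FF_mul_ee (y n) (x n)), prod_ite_eq_ite]
  rw [Finset.sum_congr rfl (fun y _ => this y)]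
  simp [Finset.sum_ite_eq' Finset.univ x]

end LA2
end HL

namespace HL
open scoped Classical

lemma summable_ite_geo {q : ℝ} (h0 : 0 ≤ q) (h1 : q < 1) (c : ℝ) (m : ℕ) :
    Summable (fun r : ℕ => if r < m then 0 else c * q ^ r) := by
  have hs1 : Summable (fun r : ℕ => c * q ^ r) :=
    (summable_geometric_of_lt_one h0 h1).mul_left c
  have hs2 : Summable (fun r : ℕ => if r < m then c * q ^ r else 0) :=
    summable_of_ne_finset_zero (s := Finset.range m)
      (fun b hb => if_neg (by simpa using hb))
  have he : (fun r : ℕ => if r < m then 0 else c * q ^ r)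
      = (fun r : ℕ => c * q ^ r - (if r < m then c * q ^ r else 0)) := by
    funext r; by_cases h : r < m <;> simp [h]
  rw [he]
  exact hs1.sub hs2

lemma tsum_ite_geo {q : ℝ} (h0 : 0 ≤ q) (h1 : q < 1) (c : ℝ) (m : ℕ) :
    ∑' r : ℕ, (if r < m then 0 else c * q ^ r) = c * q ^ m / (1 - q) := by
  have hs1 : Summable (fun r : ℕ => c * q ^ r) :=
    (summable_geometric_of_lt_one h0 h1).mul_left c
  have hs2 : Summable (fun r : ℕ => if r < m then c * q ^ r else 0) :=
    summable_of_ne_finset_zero (s := Finset.range m)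
      (fun b hb => if_neg (by simpa using hb))
  have he : (fun r : ℕ => if r < m then 0 else c * q ^ r)
      = (fun r : ℕ => c * q ^ r - (if r < m then c * q ^ r else 0)) := by
    funext r; by_cases h : r < m <;> simp [h]
  rw [he, Summable.tsum_sub hs1 hs2]
  rw [tsum_mul_left, tsum_geometric_of_lt_one h0 h1]
  rw [tsum_eq_sum (s := Finset.range m) (fun b hb => if_neg (by simpa using hb))]
  rw [Finset.sum_congr rfl (fun b hb => if_pos (Finset.mem_range.1 hb)), ← Finset.mul_sum]
  rw [geom_sum_eq (by linarith : q ≠ 1) m]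
  have hne : (1:ℝ) - q ≠ 0 := by linarith
  have hne' : q - 1 ≠ 0 := by linarith
  rw [eq_div_iff hne]
  field_simp
  ring

section J
variable {ν : ℕ} [NeZero ν] (N : ℕ) (x₀ : HX ν)

/-- first `N` coordinates. -/
def cX (N : ℕ) (x : HX ν) : Fin N → Fin ν := fun i => x.1 i

/-- the point of the cube `Q_N` with prescribed first `N` coordinates. -/
def ptX (g : Fin N → Fin ν) : HX ν := patch N g x₀

lemma ptX_mem (g : Fin N → Fin ν) : ptX N x₀ g ∈ cube ν N x₀ := patch_mem N g x₀

lemma cX_ptX (g : Fin N → Fin ν) : cX N (ptX N x₀ g) = g := by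
  funext i
  show (patch N g x₀).1 i = g i
  rw [patch_coord_lt N g x₀ i.isLt]

lemma ptX_cX {y : HX ν} (hy : y ∈ cube ν N x₀) : ptX N x₀ (cX N y) = y := by
  apply Subtype.ext
  funext n
  by_cases hn : n < N
  · rw [show (ptX N x₀ (cX N y)).1 n = cX N y ⟨n, hn⟩ from patch_coord_lt N _ x₀ hn]
    rfl
  · rw [show (ptX N x₀ (cX N y)).1 n = x₀.1 n from dif_neg hn]
    exact (hy n (by omega)).symm

lemma ptX_inj : Function.Injective (ptX N x₀) := fun g g' h => by
  rw [← cX_ptX N x₀ g, ← cX_ptX N x₀ g', h]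

/-- embedding of functions on the model cube into `ℓ²`. -/
def JX (f : (Fin N → Fin ν) → ℝ) : Hl2 ν :=
  ∑ g, lp.single 2 (ptX N x₀ g) (f g)

lemma single_apply' (i j : HX ν) (a : ℝ) :
    (lp.single (E := fun _ : HX ν => ℝ) 2 i a) j = if j = i then a else 0 := by
  rcases eq_or_ne j i with h | h
  · subst h; rw [if_pos rfl]; exact lp.single_apply_self (E := fun _ : HX ν => ℝ) 2 j a
  · rw [if_neg h]; exact lp.single_apply_ne (E := fun _ : HX ν => ℝ) 2 i a h

lemma JX_coe (f : (Fin N → Fin ν) → ℝ) (y : HX ν) :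
    JX N x₀ f y = if y ∈ cube ν N x₀ then f (cX N y) else 0 := by
  rw [JX]
  have hc := lp.coeFn_sum (fun g => lp.single (E := fun _ : HX ν => ℝ) 2 (ptX N x₀ g) (f g))
    Finset.univ
  rw [hc, Finset.sum_apply]
  by_cases hy : y ∈ cube ν N x₀
  · rw [if_pos hy]
    have : ∀ g, (lp.single (E := fun _ : HX ν => ℝ) 2 (ptX N x₀ g) (f g)) y
        = if g = cX N y then f g else 0 := by
      intro g
      rw [single_apply']
      congr 1
      apply propext
      constructor
      · intro h; rw [← cX_ptX N x₀ g, ← h]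
      · intro h; rw [h, ptX_cX N x₀ hy]
    rw [Finset.sum_congr rfl (fun g _ => this g)]
    rw [Finset.sum_ite_eq' Finset.univ (cX N y) f]
    simp
  · rw [if_neg hy]
    refine Finset.sum_eq_zero fun g _ => ?_
    rw [single_apply', if_neg (fun h : y = ptX N x₀ g => hy (h ▸ ptX_mem N x₀ g))]

end J
end HL

namespace HL
open scoped Classical

lemma filter_lt_eq_map {N r : ℕ} (hr : r ≤ N) :
    Finset.univ.filter (fun n : Fin N => (n : ℕ) < r)
      = Finset.map (Fin.castLEEmb hr) Finset.univ := by
  ext n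
  simp only [Finset.mem_filter, Finset.mem_univ, true_and, Finset.mem_map,
    Fin.castLEEmb_apply]
  constructor
  · intro hn
    first
      | exact ⟨⟨n.1, hn⟩, Fin.ext rfl⟩
      | exact ⟨⟨n.1, hn⟩, Finset.mem_univ _, Fin.ext rfl⟩
  · intro hh
    first
      | (obtain ⟨i, rfl⟩ := hh; exact i.isLt)
      | (obtain ⟨i, -, rfl⟩ := hh; exact i.isLt)

lemma prod_filter_lt {M : Type*} [CommMonoid M] {N r : ℕ} (hr : r ≤ N) (φ : Fin N → M) :
    ∏ n ∈ Finset.univ.filter (fun n : Fin N => (n : ℕ) < r), φ n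
      = ∏ i : Fin r, φ (Fin.castLE hr i) := by
  rw [filter_lt_eq_map hr, Finset.prod_map]
  rfl

section CS
variable {ν : ℕ} [NeZero ν] {N : ℕ} {x₀ : HX ν}

lemma JX_BB_coe (g : Fin N → Fin ν) {x : HX ν} (hx : x ∈ cube ν N x₀) :
    JX N x₀ (BB ν N g) x = BB ν N g (cX N x) := by
  rw [JX_coe, if_pos hx]

lemma cs_eval (g : Fin N → Fin ν) {x : HX ν} (hx : x ∈ cube ν N x₀) {r : ℕ} (hr : r ≤ N) :
    cubeSum ν r x (JX N x₀ (BB ν N g))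
      = if (∀ n : Fin N, (n : ℕ) < r → g n = 0)
          then (ν : ℝ) ^ r * BB ν N g (cX N x) else 0 := by
  rw [cubeSum, sum_cube]
  have hmem : ∀ h : Fin r → Fin ν, patch r h x ∈ cube ν N x₀ := by
    intro h
    rw [← cube_eq_of_mem hx]
    exact cube_mono hr x (patch_mem r h x)
  have hterm : ∀ h : Fin r → Fin ν,
      JX N x₀ (BB ν N g) (patch r h x)
        = (∏ i : Fin r, ee ν (g (Fin.castLE hr i)) (h i))
          * ∏ n ∈ Finset.univ.filter (fun n : Fin N => ¬ (n : ℕ) < r),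
              ee ν (g n) (cX N x n) := by
    intro h
    rw [JX_coe, if_pos (hmem h), BB]
    rw [← Finset.prod_filter_mul_prod_filter_not Finset.univ (fun n : Fin N => (n : ℕ) < r)]
    congr 1
    · rw [prod_filter_lt hr]
      refine Finset.prod_congr rfl fun i _ => ?_
      congr 1
      show (patch r h x).1 (Fin.castLE hr i) = h i
      rw [patch_coord_lt r h x (show ((Fin.castLE hr i : Fin N) : ℕ) < r from i.isLt)]
      exact congrArg h (Fin.ext rfl)
    · refine Finset.prod_congr rfl fun n hn => ?_
      have hn' : ¬ (n : ℕ) < r := (Finset.mem_filter.1 hn).2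
      congr 1
      show (patch r h x).1 n = x.1 n
      exact dif_neg hn'
  rw [Finset.sum_congr rfl (fun h _ => hterm h), ← Finset.sum_mul]
  rw [← Fintype.prod_sum (fun i j => ee ν (g (Fin.castLE hr i)) j)]
  rw [Finset.prod_congr rfl (fun i _ => sum_ee (g (Fin.castLE hr i)))]
  by_cases hcond : ∀ n : Fin N, (n : ℕ) < r → g n = 0
  · rw [if_pos hcond]
    have h1 : ∀ i : Fin r, (if g (Fin.castLE hr i) = 0 then (ν:ℝ) else 0) = (ν:ℝ) :=
      fun i => if_pos (hcond _ i.isLt)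
    rw [Finset.prod_congr rfl (fun i _ => h1 i), Finset.prod_const, Finset.card_univ,
      Fintype.card_fin]
    congr 1
    rw [BB, ← Finset.prod_filter_mul_prod_filter_not Finset.univ (fun n : Fin N => (n : ℕ) < r)]
    rw [show ∏ n ∈ Finset.univ.filter (fun n : Fin N => (n : ℕ) < r),
        ee ν (g n) (cX N x n) = 1 from
      Finset.prod_eq_one fun n hn => by
        rw [hcond n (Finset.mem_filter.1 hn).2]; exact ee_zero_left _]
    rw [one_mul]
  · rw [if_neg hcond]
    push_neg at hcond
    obtain ⟨n, hn, hgn⟩ := hcond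
    have : (if g (Fin.castLE hr ⟨n.1, hn⟩) = 0 then (ν:ℝ) else 0) = 0 := by
      rw [if_neg (by rwa [show Fin.castLE hr ⟨n.1, hn⟩ = n from Fin.ext rfl])]
    rw [Finset.prod_eq_zero (Finset.mem_univ (⟨n.1, hn⟩ : Fin r)) this, zero_mul]

lemma cs_big (g : Fin N → Fin ν) {x : HX ν} (hx : x ∈ cube ν N x₀) {r : ℕ} (hr : N ≤ r) :
    cubeSum ν r x (JX N x₀ (BB ν N g)) = if g = 0 then (ν : ℝ) ^ N else 0 := by
  rw [cubeSum]
  rw [tsum_cube_mono hr x _ (fun y hy => by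
    rw [JX_coe, if_neg (by rwa [← cube_eq_of_mem hx])])]
  rw [show (∑' y : cube ν N x, JX N x₀ (BB ν N g) y) = cubeSum ν N x (JX N x₀ (BB ν N g))
      from rfl]
  rw [cs_eval g hx le_rfl]
  by_cases hg : g = 0
  · rw [if_pos (fun n _ => by rw [hg]; rfl), if_pos hg, hg]
    rw [show BB ν N 0 (cX N x) = 1 from Finset.prod_eq_one fun n _ => ee_zero_left _]
    rw [mul_one]
  · rw [if_neg hg, if_neg]
    intro hc
    exact hg (funext fun n => hc n n.isLt)

end CS
end HL

namespace HL
open scoped Classical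

/-- the exceptional lowest eigenvalue of the compression. -/
def lamN (ν N : ℕ) (p : ℝ) : ℝ := p ^ N * (ν - 1) / (ν - p)

/-- least index where `g` is nonzero. -/
def msupp {ν N : ℕ} [NeZero ν] (g : Fin N → Fin ν) : ℕ :=
  sInf {n : ℕ | ∃ hn : n < N, g ⟨n, hn⟩ ≠ 0}

/-- the eigenvalue attached to the basis vector `BB g`. -/
def muG (ν N : ℕ) [NeZero ν] (p : ℝ) (g : Fin N → Fin ν) : ℝ :=
  if g = 0 then lamN ν N p else p ^ msupp g

section MS
variable {ν N : ℕ} [NeZero ν] {g : Fin N → Fin ν}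

lemma msupp_set_nonempty (hg : g ≠ 0) :
    {n : ℕ | ∃ hn : n < N, g ⟨n, hn⟩ ≠ 0}.Nonempty := by
  obtain ⟨i, hi⟩ := Function.ne_iff.1 hg
  exact ⟨i.1, i.isLt, by rwa [Fin.eta]⟩

lemma msupp_lt (hg : g ≠ 0) : msupp g < N :=
  (Nat.sInf_mem (msupp_set_nonempty hg)).1

lemma msupp_spec (hg : g ≠ 0) : g ⟨msupp g, msupp_lt hg⟩ ≠ 0 :=
  (Nat.sInf_mem (msupp_set_nonempty hg)).2

lemma msupp_min (hg : g ≠ 0) {n : ℕ} (hn : n < msupp g) (hnN : n < N) : g ⟨n, hnN⟩ = 0 := by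
  by_contra hne
  exact absurd hn (not_lt.2 (Nat.sInf_le ⟨hnN, hne⟩))

end MS

section Eigen
variable {ν : ℕ} [NeZero ν] {p : ℝ} {Δ : Hl2 ν →L[ℝ] Hl2 ν} {N : ℕ} {x₀ : HX ν}
  {P : Hl2 ν →L[ℝ] Hl2 ν}

lemma Pfix (hP : ∀ ψ x, P ψ x = (cube ν N x₀).indicator (fun x' => ψ x') x)
    (f : (Fin N → Fin ν) → ℝ) : P (JX N x₀ f) = JX N x₀ f := by
  apply lp.ext
  funext y
  rw [hP]
  by_cases hy : y ∈ cube ν N x₀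
  · rw [Set.indicator_of_mem hy]
  · rw [Set.indicator_of_notMem hy, JX_coe, if_neg hy]

lemma eigen_eq (hν : 2 ≤ ν) (hp0 : 0 < p) (hp1 : p < 1) (hΔ : IsHierLap ν p Δ)
    (hP : ∀ ψ x, P ψ x = (cube ν N x₀).indicator (fun x' => ψ x') x)
    (g : Fin N → Fin ν) :
    (P.comp ((-Δ).comp P)) (JX N x₀ (BB ν N g))
      = muG ν N p g • JX N x₀ (BB ν N g) := by
  have hν0 : (ν : ℝ) ≠ 0 := Nat.cast_ne_zero.2 (by omega)
  have hν1 : (1:ℝ) ≤ (ν:ℝ) := by exact_mod_cast Nat.one_le_of_lt hν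
  have hνp : (ν : ℝ) - p ≠ 0 := by nlinarith
  have h1p : (1:ℝ) - p ≠ 0 := by linarith
  set ψg := JX N x₀ (BB ν N g) with hψg
  have hA : (P.comp ((-Δ).comp P)) ψg = P (-(Δ ψg)) := by
    rw [ContinuousLinearMap.comp_apply, ContinuousLinearMap.comp_apply, Pfix hP,
      ContinuousLinearMap.neg_apply]
  rw [hA]
  apply lp.ext
  funext x
  rw [hP]
  rw [lp.coeFn_smul, Pi.smul_apply, smul_eq_mul]
  by_cases hx : x ∈ cube ν N x₀
  · rw [Set.indicator_of_mem hx]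
    show -(Δ ψg x) = muG ν N p g * ψg x
    set B := BB ν N g (cX N x) with hB
    have hψx : ψg x = B := JX_BB_coe g hx
    by_cases hg : g = 0
    · -- constant eigenvector
      subst hg
      have hB1 : B = 1 := Finset.prod_eq_one fun n _ => ee_zero_left _
      have hterm : ∀ r : ℕ,
          (1 - p) * p ^ r * (((ν : ℝ) ^ (r + 1))⁻¹ * cubeSum ν (r + 1) x ψg - ψg x)
            = (if r < N then 0 else ((1 - p) * (ν:ℝ) ^ N / ν) * (p / ν) ^ r)
              + (if r < N then 0 else (-(1 - p)) * p ^ r) := by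
        intro r
        by_cases hrN : r < N
        · rw [if_pos hrN, if_pos hrN, hψg, cs_eval 0 hx (by omega : r + 1 ≤ N)]
          have hc : ∀ n : Fin N, (n : ℕ) < r + 1 → (0 : Fin N → Fin ν) n = 0 := fun n _ => rfl
          rw [if_pos hc, ← hψg, hψx, ← hB]
          rw [inv_mul_cancel_left₀ (pow_ne_zero _ hν0), hB1]
          simp
        · rw [if_neg hrN, if_neg hrN, hψg, cs_big 0 hx (by omega : N ≤ r + 1)]
          rw [if_pos rfl, ← hψg, hψx, hB1]
          rw [div_pow, pow_succ]
          field_simp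
          ring
      rw [hΔ ψg x, tsum_congr hterm]
      rw [Summable.tsum_add (summable_ite_geo (by positivity) (by
            rw [div_lt_one (by positivity)]; linarith) _ N)
          (summable_ite_geo hp0.le hp1 _ N)]
      rw [tsum_ite_geo (by positivity) (by rw [div_lt_one (by positivity)]; linarith) _ N]
      rw [tsum_ite_geo hp0.le hp1 _ N]
      rw [hψx, hB1, muG, if_pos rfl, lamN, mul_one]
      have hd : (1:ℝ) - p / ν ≠ 0 := by
        have : p / ν < 1 := by rw [div_lt_one (by positivity)]; linarith
        linarith
      rw [div_pow]
      field_simp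
      ring
    · -- genuine eigenvectors
      set m := msupp g with hm
      have hmN : m < N := msupp_lt hg
      have hterm : ∀ r : ℕ,
          (1 - p) * p ^ r * (((ν : ℝ) ^ (r + 1))⁻¹ * cubeSum ν (r + 1) x ψg - ψg x)
            = if r < m then 0 else (-((1 - p) * B)) * p ^ r := by
        intro r
        by_cases hrm : r < m
        · rw [if_pos hrm, hψg, cs_eval g hx (by omega : r + 1 ≤ N)]
          have hc : ∀ n : Fin N, (n : ℕ) < r + 1 → g n = 0 := fun n hn => by
            rw [← Fin.eta n n.isLt]; exact msupp_min hg (by omega) n.isLt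
          rw [if_pos hc, ← hψg, hψx, ← hB]
          rw [inv_mul_cancel_left₀ (pow_ne_zero _ hν0)]
          simp
        · rw [if_neg hrm]
          have hcs : cubeSum ν (r + 1) x ψg = 0 := by
            by_cases hrN : r + 1 ≤ N
            · rw [hψg, cs_eval g hx hrN, if_neg]
              intro hc
              exact msupp_spec hg (hc ⟨m, hmN⟩ (by
                rw [show ((⟨m, hmN⟩ : Fin N) : ℕ) = m from rfl]; omega))
            · rw [hψg, cs_big g hx (by omega), if_neg hg]
          rw [hcs, hψx]
          ring
      rw [hΔ ψg x, tsum_congr hterm, tsum_ite_geo hp0.le hp1 _ m]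
      rw [hψx, muG, if_neg hg, ← hm]
      field_simp
  · rw [Set.indicator_of_notMem hx]
    have : ψg x = 0 := by rw [hψg, JX_coe, if_neg hx]
    rw [this, mul_zero]

end Eigen
end HL

namespace HL
open scoped Classical

section Mult
variable {ν : ℕ} [NeZero ν] {p : ℝ} {Δ : Hl2 ν →L[ℝ] Hl2 ν} {N : ℕ} {x₀ : HX ν}
  {P : Hl2 ν →L[ℝ] Hl2 ν}

/-- `JX` as a linear map. -/
def JXl (N : ℕ) (x₀ : HX ν) : ((Fin N → Fin ν) → ℝ) →ₗ[ℝ] Hl2 ν where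
  toFun := JX N x₀
  map_add' f f' := by
    apply lp.ext
    funext y
    rw [lp.coeFn_add, Pi.add_apply, JX_coe, JX_coe, JX_coe]
    by_cases hy : y ∈ cube ν N x₀ <;> simp [hy]
  map_smul' c f := by
    apply lp.ext
    funext y
    rw [RingHom.id_apply, lp.coeFn_smul, Pi.smul_apply, JX_coe, JX_coe]
    by_cases hy : y ∈ cube ν N x₀ <;> simp [hy]

lemma JXl_inj : Function.Injective (JXl N x₀) := by
  intro f f' h
  funext g
  have := congrFun (congrArg (fun ψ : Hl2 ν => (ψ : HX ν → ℝ)) h) (ptX N x₀ g)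
  simpa only [JXl, LinearMap.coe_mk, AddHom.coe_mk, JX_coe,
    if_pos (ptX_mem N x₀ g), cX_ptX] using this

lemma range_P_eq (hP : ∀ ψ x, P ψ x = (cube ν N x₀).indicator (fun x' => ψ x') x) :
    LinearMap.range (P : Hl2 ν →ₗ[ℝ] Hl2 ν) = LinearMap.range (JXl N x₀) := by
  apply le_antisymm
  · rintro ψ ⟨φ, rfl⟩
    refine ⟨fun g => φ (ptX N x₀ g), ?_⟩
    apply lp.ext
    funext y
    show JX N x₀ _ y = P φ y
    rw [JX_coe, hP]
    by_cases hy : y ∈ cube ν N x₀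
    · rw [if_pos hy, Set.indicator_of_mem hy, ptX_cX N x₀ hy]
    · rw [if_neg hy, Set.indicator_of_notMem hy]
  · rintro ψ ⟨f, rfl⟩
    exact ⟨JXl N x₀ f, Pfix hP f⟩

lemma eigenspace_inf_eq (hν : 2 ≤ ν) (hp0 : 0 < p) (hp1 : p < 1) (hΔ : IsHierLap ν p Δ)
    (hP : ∀ ψ x, P ψ x = (cube ν N x₀).indicator (fun x' => ψ x') x) (μ : ℝ) :
    Module.End.eigenspace ((P.comp ((-Δ).comp P) : Hl2 ν →L[ℝ] Hl2 ν) :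
        Hl2 ν →ₗ[ℝ] Hl2 ν) μ ⊓ LinearMap.range (P : Hl2 ν →ₗ[ℝ] Hl2 ν)
      = Submodule.map (JXl N x₀)
          (Submodule.span ℝ (Set.range
            (fun g : {g : Fin N → Fin ν // muG ν N p g = μ} => BB ν N g.1))) := by
  set A : Hl2 ν →ₗ[ℝ] Hl2 ν :=
    ((P.comp ((-Δ).comp P) : Hl2 ν →L[ℝ] Hl2 ν) : Hl2 ν →ₗ[ℝ] Hl2 ν) with hAdef
  have hAJ : ∀ g : Fin N → Fin ν, A (JXl N x₀ (BB ν N g)) = muG ν N p g • JXl N x₀ (BB ν N g) :=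
    fun g => eigen_eq hν hp0 hp1 hΔ hP g
  apply le_antisymm
  · rintro ψ ⟨hψe, hψr⟩
    rw [SetLike.mem_coe, range_P_eq hP] at hψr
    obtain ⟨v, rfl⟩ := hψr
    rw [SetLike.mem_coe, Module.End.mem_eigenspace_iff] at hψe
    -- expand v in the basis
    have hv := expand_BB (ν := ν) (N := N) v
    have hco : ∀ k, cf ν N v k * muG ν N p k = μ * cf ν N v k := by
      intro k
      have h1 : A (JXl N x₀ v) = JXl N x₀ (∑ g, (cf ν N v g * muG ν N p g) • BB ν N g) := by
        conv_lhs => rw [hv]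
        rw [map_sum, map_sum, map_sum]
        refine Finset.sum_congr rfl fun g _ => ?_
        rw [map_smul, map_smul, hAJ g, smul_smul, ← map_smul]
      have h2 : μ • JXl N x₀ v = JXl N x₀ (∑ g, (μ * cf ν N v g) • BB ν N g) := by
        conv_lhs => rw [hv]
        rw [map_sum, Finset.smul_sum, map_sum]
        refine Finset.sum_congr rfl fun g _ => ?_
        rw [map_smul, map_smul, smul_smul, ← map_smul]
      have h3 := JXl_inj (h1.symm.trans (hψe.trans h2))
      have h4 := congrArg (fun w => cf ν N w k) h3
      simpa only [cf_sum] using h4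
    refine ⟨∑ g ∈ Finset.univ.filter (fun g => muG ν N p g = μ), cf ν N v g • BB ν N g,
      ?_, ?_⟩
    · apply Submodule.sum_mem
      intro g hg
      exact Submodule.smul_mem _ _ (Submodule.subset_span
        ⟨⟨g, (Finset.mem_filter.1 hg).2⟩, rfl⟩)
    · rw [← Finset.sum_filter_add_sum_filter_not Finset.univ
        (fun g => muG ν N p g = μ) (fun g => cf ν N v g • BB ν N g)] at hv
      have hz : ∑ g ∈ Finset.univ.filter (fun g => ¬ muG ν N p g = μ),
          cf ν N v g • BB ν N g = 0 := by
        refine Finset.sum_eq_zero fun g hg => ?_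
        have hgne : muG ν N p g ≠ μ := (Finset.mem_filter.1 hg).2
        have : cf ν N v g = 0 := by
          by_contra hc
          exact hgne (mul_right_cancel₀ hc (by rw [mul_comm]; exact hco g))
        rw [this, zero_smul]
      rw [hz, add_zero] at hv
      rw [← hv]
  · rw [Submodule.map_span, Submodule.span_le]
    rintro w ⟨-, ⟨⟨g, hg⟩, rfl⟩, rfl⟩
    refine ⟨?_, ?_⟩
    · rw [SetLike.mem_coe, Module.End.mem_eigenspace_iff]
      rw [show A (JXl N x₀ (BB ν N g)) = muG ν N p g • JXl N x₀ (BB ν N g) from hAJ g, hg]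
    · rw [SetLike.mem_coe, range_P_eq hP]
      exact ⟨BB ν N g, rfl⟩

lemma multAN_eq (hν : 2 ≤ ν) (hp0 : 0 < p) (hp1 : p < 1) (hΔ : IsHierLap ν p Δ)
    (hP : ∀ ψ x, P ψ x = (cube ν N x₀).indicator (fun x' => ψ x') x) (μ : ℝ) :
    multAN ν Δ P μ = Fintype.card {g : Fin N → Fin ν // muG ν N p g = μ} := by
  rw [multAN, eigenspace_inf_eq hν hp0 hp1 hΔ hP μ]
  rw [← LinearEquiv.finrank_eq (Submodule.equivMapOfInjective (JXl N x₀) JXl_inj _)]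
  have hli : LinearIndependent ℝ (fun g : {g : Fin N → Fin ν // muG ν N p g = μ} => BB ν N g.1) :=
    BB_li.comp Subtype.val Subtype.val_injective
  rw [finrank_span_eq_card hli]

end Mult
end HL

namespace HL
open scoped Classical

section Count
variable {ν N : ℕ} [NeZero ν] {p : ℝ}

/-- the number of maps on `Fin N` vanishing below `k` is `ν ^ (N-k)`. -/
lemma card_prefix (k : ℕ) (hk : k ≤ N) :
    Fintype.card {g : Fin N → Fin ν // ∀ n : Fin N, (n : ℕ) < k → g n = 0}
      = ν ^ (N - k) := by
  have e : {g : Fin N → Fin ν // ∀ n : Fin N, (n : ℕ) < k → g n = 0}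
      ≃ (Fin (N - k) → Fin ν) := {
    toFun := fun g i => g.1 ⟨k + i.1, by omega⟩
    invFun := fun h => ⟨fun n => if hn : (n : ℕ) < k then 0 else h ⟨(n : ℕ) - k, by omega⟩,
      fun n hn => dif_pos hn⟩
    left_inv := fun g => by
      apply Subtype.ext
      funext n
      by_cases hn : (n : ℕ) < k
      · exact (dif_pos hn).trans (g.2 n hn).symm
      · exact (dif_neg hn).trans (congrArg g.1 (Fin.ext (by simp; omega)))
    right_inv := fun h => by
      funext i
      exact (dif_neg (by omega : ¬ (k + i.1 < k))).trans
        (congrArg h (Fin.ext (by simp))) }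
  rw [Fintype.card_congr e, Fintype.card_fun]
  simp

lemma pow_inj (hp0 : 0 < p) (hp1 : p < 1) {a b : ℕ} (h : p ^ a = p ^ b) : a = b := by
  rcases lt_trichotomy a b with hab | hab | hab
  · exact absurd h (ne_of_gt (pow_lt_pow_right_of_lt_one₀ hp0 hp1 hab))
  · exact hab
  · exact absurd h.symm (ne_of_gt (pow_lt_pow_right_of_lt_one₀ hp0 hp1 hab))

lemma lamN_lt_pow (hν : 2 ≤ ν) (hp0 : 0 < p) (hp1 : p < 1) : lamN ν N p < p ^ N := by
  have hν2 : (2:ℝ) ≤ (ν:ℝ) := by exact_mod_cast hν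
  have h1 : (0:ℝ) < (ν:ℝ) - p := by linarith
  rw [lamN, div_lt_iff₀ h1]
  nlinarith [pow_pos hp0 N]

lemma muG_eq_pow_iff (hν : 2 ≤ ν) (hp0 : 0 < p) (hp1 : p < 1) {k : ℕ} (hkN : k < N)
    (g : Fin N → Fin ν) :
    muG ν N p g = p ^ k ↔ ((∀ n : Fin N, (n : ℕ) < k → g n = 0) ∧ g ⟨k, hkN⟩ ≠ 0) := by
  have hpN : p ^ N ≤ p ^ k := pow_le_pow_of_le_one hp0.le hp1.le (by omega)
  constructor
  · intro hμ
    have hg : g ≠ 0 := by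
      intro hg0
      rw [muG, if_pos hg0] at hμ
      exact absurd hμ (ne_of_lt (lt_of_lt_of_le (lamN_lt_pow hν hp0 hp1) hpN))
    rw [muG, if_neg hg] at hμ
    have hmk : msupp g = k := pow_inj hp0 hp1 hμ
    constructor
    · intro n hn
      rw [← Fin.eta n n.isLt]
      exact msupp_min hg (by omega) n.isLt
    · rw [show (⟨k, hkN⟩ : Fin N) = ⟨msupp g, msupp_lt hg⟩ from Fin.ext (by simp [hmk])]
      exact msupp_spec hg
  · rintro ⟨hpre, hk⟩
    have hg : g ≠ 0 := fun h => hk (by rw [h]; rfl)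
    have hmk : msupp g = k := by
      have h1 := msupp_spec hg
      have h2 := msupp_lt hg
      rcases lt_trichotomy (msupp g) k with h | h | h
      · exact absurd (hpre ⟨msupp g, h2⟩ h) h1
      · exact h
      · exact absurd (msupp_min hg h hkN) hk
    rw [muG, if_neg hg, hmk]

lemma card_muG_pow (hν : 2 ≤ ν) (hp0 : 0 < p) (hp1 : p < 1) {k : ℕ} (hkN : k < N) :
    Fintype.card {g : Fin N → Fin ν // muG ν N p g = p ^ k}
      = ν ^ (N - k) - ν ^ (N - (k + 1)) := by
  rw [Fintype.card_congr (Equiv.subtypeEquivRight (muG_eq_pow_iff hν hp0 hp1 hkN))]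
  have key : Fintype.card {g : Fin N → Fin ν //
        (∀ n : Fin N, (n : ℕ) < k → g n = 0) ∧ g ⟨k, hkN⟩ ≠ 0}
      + Fintype.card {g : Fin N → Fin ν // ∀ n : Fin N, (n : ℕ) < k + 1 → g n = 0}
      = Fintype.card {g : Fin N → Fin ν // ∀ n : Fin N, (n : ℕ) < k → g n = 0} := by
    have e2 : {g : Fin N → Fin ν // ∀ n : Fin N, (n : ℕ) < k + 1 → g n = 0}
        ≃ {g : Fin N → Fin ν // (∀ n : Fin N, (n : ℕ) < k → g n = 0) ∧ g ⟨k, hkN⟩ = 0} := by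
      refine Equiv.subtypeEquivRight fun g => ?_
      constructor
      · intro h
        exact ⟨fun n hn => h n (by omega), h ⟨k, hkN⟩ (by simp)⟩
      · rintro ⟨h1, h2⟩ n hn
        rcases Nat.lt_or_ge (n : ℕ) k with h | h
        · exact h1 n h
        · have : n = ⟨k, hkN⟩ := Fin.ext (by simp; omega)
          rw [this]; exact h2
    rw [Fintype.card_congr e2]
    rw [Fintype.card_subtype, Fintype.card_subtype, Fintype.card_subtype]
    rw [← Finset.filter_filter, ← Finset.filter_filter]
    rw [add_comm]
    have haux : ∀ (s : Finset (Fin N → Fin ν)) (q : (Fin N → Fin ν) → Prop),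
        (s.filter q).card + (s.filter fun a => ¬ q a).card = s.card := fun s q =>
      Finset.card_filter_add_card_filter_not q
    have := haux (Finset.univ.filter (fun g : Fin N → Fin ν => ∀ n : Fin N, (n : ℕ) < k → g n = 0))
      (fun g : Fin N → Fin ν => g ⟨k, hkN⟩ = 0)
    convert this using 2 <;> congr!
  have hk1 : k ≤ N := hkN.le
  have hk2 : k + 1 ≤ N := hkN
  have h1 := @card_prefix ν N _ k hk1
  have h2 := @card_prefix ν N _ (k + 1) hk2
  rw [h1, h2] at key
  exact Nat.eq_sub_of_add_eq key

end Count
end HL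

namespace HL
open scoped Classical

section Final
variable {ν : ℕ} [NeZero ν] {p : ℝ} {Δ : Hl2 ν →L[ℝ] Hl2 ν} {N : ℕ} {x₀ : HX ν}
  {P : Hl2 ν →L[ℝ] Hl2 ν}

lemma tsum_mult (hν : 2 ≤ ν) (hp0 : 0 < p) (hp1 : p < 1) (hΔ : IsHierLap ν p Δ)
    (hP : ∀ ψ x, P ψ x = (cube ν N x₀).indicator (fun x' => ψ x') x) (lam : ℝ) :
    ∑' μ : {μ : ℝ // μ < lam}, (multAN ν Δ P μ : ℝ)
      = ((Finset.univ.filter (fun g : Fin N → Fin ν => muG ν N p g < lam)).card : ℝ) := by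
  have h1 : ∀ μ : {μ : ℝ // μ < lam}, (multAN ν Δ P μ : ℝ)
      = ((Fintype.card {g : Fin N → Fin ν // muG ν N p g = μ.1} : ℕ) : ℝ) := fun μ => by
    rw [multAN_eq hν hp0 hp1 hΔ hP]
  rw [tsum_congr h1]
  have hz : ∀ μ : {μ : ℝ // μ < lam},
      μ ∉ (Finset.image (muG ν N p) Finset.univ).subtype (· < lam) →
      ((Fintype.card {g : Fin N → Fin ν // muG ν N p g = μ.1} : ℕ) : ℝ) = 0 := by
    intro μ hμ
    have hne : ∀ g : Fin N → Fin ν, muG ν N p g ≠ μ.1 := by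
      intro g hg
      exact hμ (Finset.mem_subtype.2 (Finset.mem_image.2 ⟨g, Finset.mem_univ g, hg⟩))
    rw [show Fintype.card {g : Fin N → Fin ν // muG ν N p g = μ.1} = 0 from
      Fintype.card_eq_zero_iff.2 ⟨fun g => hne g.1 g.2⟩]
    norm_num
  rw [tsum_eq_sum hz, ← Nat.cast_sum]
  congr 1
  rw [Finset.sum_congr rfl (fun μ _ => Fintype.card_subtype _)]
  have h4 := Finset.sum_subtype_eq_sum_filter
    (fun t => (Finset.univ.filter (fun g : Fin N → Fin ν => muG ν N p g = t)).card)
    (s := Finset.image (muG ν N p) Finset.univ) (p := fun μ => μ < lam)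
  rw [h4]
  have h3 : (Finset.univ.filter (fun g : Fin N → Fin ν => muG ν N p g < lam)).card
      = ∑ b ∈ (Finset.image (muG ν N p) Finset.univ).filter (fun μ => μ < lam),
          ((Finset.univ.filter (fun g : Fin N → Fin ν => muG ν N p g < lam)).filter
            (fun g => muG ν N p g = b)).card :=
    Finset.card_eq_sum_card_fiberwise (fun g hg => Finset.mem_filter.2
      ⟨Finset.mem_image.2 ⟨g, Finset.mem_univ g, rfl⟩, (Finset.mem_filter.1 hg).2⟩)
  rw [h3]
  refine Finset.sum_congr rfl fun μ hμ => ?_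
  have hμlam : μ < lam := (Finset.mem_filter.1 hμ).2
  rw [Finset.filter_filter]
  congr 1
  apply Finset.filter_congr
  intro g _
  constructor
  · intro h; exact ⟨h ▸ hμlam, h⟩
  · rintro ⟨-, h⟩; exact h

lemma count_muG_lt (hν : 2 ≤ ν) (hp0 : 0 < p) (hp1 : p < 1) {lam : ℝ}
    (hmem : p ^ (k0 p lam) < lam) (hmin : ∀ j < k0 p lam, lam ≤ p ^ j)
    (hNk : k0 p lam ≤ N) :
    (Finset.univ.filter (fun g : Fin N → Fin ν => muG ν N p g < lam)).card
      = ν ^ (N - k0 p lam) := by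
  have heq : ∀ g ∈ Finset.univ (α := Fin N → Fin ν),
      (muG ν N p g < lam ↔ ∀ n : Fin N, (n : ℕ) < k0 p lam → g n = 0) := by
    intro g _
    by_cases hg : g = 0
    · subst hg
      rw [muG, if_pos rfl]
      constructor
      · intro _ n _; rfl
      · intro _
        calc lamN ν N p < p ^ N := lamN_lt_pow hν hp0 hp1
          _ ≤ p ^ (k0 p lam) := pow_le_pow_of_le_one hp0.le hp1.le hNk
          _ < lam := hmem
    · rw [muG, if_neg hg]
      constructor
      · intro h n hn
        have hk0m : k0 p lam ≤ msupp g := by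
          by_contra hc
          push_neg at hc
          exact absurd h (not_lt.2 (hmin _ hc))
        rw [← Fin.eta n n.isLt]
        exact msupp_min hg (by omega) n.isLt
      · intro h
        have hk0m : k0 p lam ≤ msupp g := by
          by_contra hc
          push_neg at hc
          exact msupp_spec hg (h ⟨msupp g, msupp_lt hg⟩ hc)
        calc p ^ msupp g ≤ p ^ (k0 p lam) := pow_le_pow_of_le_one hp0.le hp1.le hk0m
          _ < lam := hmem
  rw [Finset.filter_congr heq, ← Fintype.card_subtype]
  exact card_prefix _ hNk

end Final
end HL

theorem stmt3 (ν : ℕ) (hν : 2 ≤ ν) (p : ℝ) (hp0 : 0 < p) (hp1 : p < 1)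
    (Δ : Hl2 ν →L[ℝ] Hl2 ν) (hΔ : IsHierLap ν p Δ) (x₀ : HX ν)
    (P : ℕ → Hl2 ν →L[ℝ] Hl2 ν)
    (hP : ∀ N (ψ : Hl2 ν) (x : HX ν),
      P N ψ x = (cube ν N x₀).indicator (fun x' => ψ x') x) :
    (∀ N : ℕ, 1 ≤ N → ∀ k : ℕ, k ≤ N - 1 →
      ν ^ (N - 1 - k) * (ν - 1) ≤ multAN ν Δ (P N) (p ^ k)) ∧
    (∀ lam : ℝ, 0 < lam → lam ≤ 1 → (∀ k : ℕ, lam ≠ p ^ k) →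
      Filter.Tendsto
        (fun N : ℕ => ((ν : ℝ) ^ N)⁻¹ *
          ∑' μ : {μ : ℝ // μ < lam}, (multAN ν Δ (P N) μ : ℝ))
        Filter.atTop (nhds ((ν : ℝ)⁻¹ ^ k0 p lam))) := by
  haveI : NeZero ν := ⟨by omega⟩
  constructor
  · intro N hN k hk
    have hkN : k < N := by omega
    rw [HL.multAN_eq hν hp0 hp1 hΔ (hP N), HL.card_muG_pow hν hp0 hp1 hkN]
    have e1 : N - k = (N - 1 - k) + 1 := by omega
    have e2 : N - (k + 1) = N - 1 - k := by omega
    rw [e1, e2, pow_succ]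
    have e3 : ν ^ (N - 1 - k) * (ν - 1) = ν ^ (N - 1 - k) * ν - ν ^ (N - 1 - k) := by
      rw [Nat.mul_sub, mul_one]
    rw [e3]
  · intro lam hlam0 hlam1 hne
    have hlam1' : lam < 1 := lt_of_le_of_ne hlam1 (by simpa using hne 0)
    have hnonempty : {k : ℕ | p ^ k < lam}.Nonempty := by
      obtain ⟨n, hn⟩ := exists_pow_lt_of_lt_one hlam0 hp1
      exact ⟨n, hn⟩
    have hmem : p ^ (k0 p lam) < lam := Nat.sInf_mem hnonempty
    have hmin : ∀ j < k0 p lam, lam ≤ p ^ j := by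
      intro j hj
      by_contra hc
      push_neg at hc
      exact absurd (Nat.sInf_le hc) (not_le.2 hj)
    apply tendsto_atTop_of_eventually_const (i₀ := k0 p lam)
    intro N hNk
    rw [HL.tsum_mult hν hp0 hp1 hΔ (hP N) lam]
    rw [HL.count_muG_lt hν hp0 hp1 hmem hmin hNk]
    have hν0 : (ν : ℝ) ≠ 0 := Nat.cast_ne_zero.2 (by omega)
    push_cast
    rw [show ((ν : ℝ)) ^ N = (ν : ℝ) ^ (N - k0 p lam) * (ν : ℝ) ^ (k0 p lam) by
      rw [← pow_add]; congr 1; omega]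
    rw [mul_inv, mul_comm (((ν : ℝ) ^ (N - k0 p lam))⁻¹), mul_assoc,
      inv_mul_cancel₀ (pow_ne_zero _ hν0), mul_one, inv_pow]
end
end
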